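/- arXiv:1812.09460 — 6 statements merged into one kernel-verified Lean document; each statement's English description precedes it below -/
import Mathlib

section
/- Let G₀ be a weighted digraph on nodes {1,...,N} with nonnegative adjacency matrix A = [a_ij] and Laplacian L = D - A where D = diag of row sums. Let C₀ be the diagonal matrix with first L diagonal entries equal to 1 and the rest 0 (1 ≤ L ≤ N). Suppose that for every node i ∈ {L+1,...,N} there exists a node j ∈ {1,...,L} and a directed path from j to i in G₀. Then for any μ₀ with 0 < μ₀ < 1/max_i Σ_j a_ij, all eigenvalues of the matrix (I_N - C₀)(I_N - μ₀ L) lie strictly inside the unit disk of the complex plane. -/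
/-- all eigenvalues of `(I - C₀)(I - μ₀ L)` lie strictly inside the
unit disk, where `L` is the Laplacian of a weighted digraph whose nodes with
index `≥ Lnum` are all reachable from some node with index `< Lnum`. -/
theorem stmt0 (N Lnum : ℕ) (hN : 0 < N) (hL1 : 1 ≤ Lnum) (hLN : Lnum ≤ N)
    (A : Matrix (Fin N) (Fin N) ℝ) (hA : ∀ i j, 0 ≤ A i j)
    (Lap : Matrix (Fin N) (Fin N) ℝ)
    (hLap : Lap = Matrix.diagonal (fun i => ∑ j, A i j) - A)
    (C₀ : Matrix (Fin N) (Fin N) ℝ)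
    (hC₀ : C₀ = Matrix.diagonal (fun i : Fin N => if (i : ℕ) < Lnum then (1 : ℝ) else 0))
    (hpath : ∀ i : Fin N, Lnum ≤ (i : ℕ) →
      ∃ j : Fin N, (j : ℕ) < Lnum ∧
        Relation.ReflTransGen (fun p q : Fin N => 0 < A q p) j i)
    (μ₀ : ℝ) (hμ₀ : 0 < μ₀)
    (hμ₀' : μ₀ < 1 / (Finset.univ.sup' ⟨⟨0, hN⟩, Finset.mem_univ _⟩
      (fun i : Fin N => ∑ j, A i j))) :
    ∀ z ∈ spectrum ℂ (((1 - C₀) * (1 - μ₀ • Lap)).map (Complex.ofReal ·)),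
      ‖z‖ < 1 := by
  intro z hz
  set S := (Finset.univ.sup' ⟨⟨0, hN⟩, Finset.mem_univ _⟩
      (fun i : Fin N => ∑ j, A i j)) with hSdef
  have hSpos : 0 < S := by
    by_contra h
    push_neg at h
    have h1 : 1 / S ≤ 0 := by
      rcases lt_or_eq_of_le h with h' | h'
      · exact le_of_lt (div_neg_of_pos_of_neg one_pos h')
      · simp [h']
    linarith
  have hμS : μ₀ * S < 1 := (lt_div_iff₀ hSpos).mp hμ₀'
  have hrowle : ∀ i, (∑ j, A i j) ≤ S := fun i =>
    Finset.le_sup' (fun i : Fin N => ∑ j, A i j) (Finset.mem_univ i)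
  have hpos : ∀ i, μ₀ * (∑ l, A i l) < 1 := fun i =>
    lt_of_le_of_lt (mul_le_mul_of_nonneg_left (hrowle i) hμ₀.le) hμS
  set M := (1 - C₀) * (1 - μ₀ • Lap) with hMdef
  -- entrywise description of M
  have hMent : ∀ i j, M i j = if (i : ℕ) < Lnum then 0
      else ((if i = j then 1 - μ₀ * (∑ l, A i l) else 0) + μ₀ * A i j) := by
    intro i j
    have h1C : (1 : Matrix (Fin N) (Fin N) ℝ) - C₀ =
        Matrix.diagonal (fun i : Fin N => if (i : ℕ) < Lnum then 0 else 1) := by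
      ext a b
      by_cases hab : a = b <;>
        simp [hC₀, Matrix.sub_apply, Matrix.one_apply, Matrix.diagonal_apply, hab] <;>
        split_ifs <;> norm_num
    have hX : ((1 : Matrix (Fin N) (Fin N) ℝ) - μ₀ • Lap) i j =
        (if i = j then 1 - μ₀ * (∑ l, A i l) else 0) + μ₀ * A i j := by
      simp only [hLap, Matrix.sub_apply, Matrix.smul_apply, Matrix.one_apply,
        Matrix.diagonal_apply, smul_eq_mul]
      split <;> ring
    rw [hMdef, h1C, Matrix.diagonal_mul, hX]
    split <;> simp
  have hM0 : ∀ (i : Fin N) (j : Fin N), (i : ℕ) < Lnum → M i j = 0 := by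
    intro i j h; rw [hMent]; simp [h]
  have hMnn : ∀ i j, 0 ≤ M i j := by
    intro i j
    rw [hMent]
    split
    · exact le_refl 0
    · have h1 : 0 ≤ μ₀ * A i j := mul_nonneg hμ₀.le (hA i j)
      have h2 : (0:ℝ) ≤ if i = j then 1 - μ₀ * (∑ l, A i l) else 0 := by
        split
        · linarith [hpos i]
        · exact le_refl 0
      linarith
  have hMrow : ∀ i, (∑ j, M i j) ≤ 1 := by
    intro i
    by_cases h : (i : ℕ) < Lnum
    · rw [Finset.sum_eq_zero (fun j _ => hM0 i j h)]; norm_num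
    · have : (∑ j, M i j) = 1 := by
        simp only [hMent, if_neg h]
        rw [Finset.sum_add_distrib, Finset.sum_ite_eq Finset.univ i
          (fun _ => 1 - μ₀ * (∑ l, A i l)), if_pos (Finset.mem_univ i), ← Finset.mul_sum]
        ring
      exact this.le
  have hMoff : ∀ (i : Fin N) (p : Fin N), Lnum ≤ (i : ℕ) → 0 < A i p → 0 < M i p := by
    intro i p hi hAip
    rw [hMent, if_neg (not_lt.mpr hi)]
    have h1 : 0 < μ₀ * A i p := mul_pos hμ₀ hAip
    have h2 : (0:ℝ) ≤ if i = p then 1 - μ₀ * (∑ l, A i l) else 0 := by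
      split
      · linarith [hpos i]
      · exact le_refl 0
    linarith
  -- row sums of powers
  set r : ℕ → Fin N → ℝ := fun k i => ∑ j, (M ^ k) i j with hrdef
  have hpownn : ∀ k i j, 0 ≤ (M ^ k) i j := by
    intro k
    induction k with
    | zero => intro i j; simp [Matrix.one_apply]; split <;> norm_num
    | succ k ih =>
      intro i j
      rw [pow_succ', Matrix.mul_apply]
      exact Finset.sum_nonneg fun l _ => mul_nonneg (hMnn i l) (ih l j)
  have hr0 : ∀ i, r 0 i = 1 := by
    intro i; simp [hrdef, Matrix.one_apply]
  have hrrec : ∀ k i, r (k + 1) i = ∑ l, M i l * r k l := by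
    intro k i
    simp only [hrdef, pow_succ', Matrix.mul_apply]
    rw [Finset.sum_comm]
    exact Finset.sum_congr rfl fun l _ => (Finset.mul_sum _ _ _).symm
  have hrstep : ∀ k, (∀ i, r (k + 1) i ≤ r k i) := by
    intro k
    induction k with
    | zero => intro i; rw [hr0, hrrec]
              calc (∑ l, M i l * r 0 l) = ∑ l, M i l := by
                     exact Finset.sum_congr rfl fun l _ => by rw [hr0]; ring
                _ ≤ 1 := hMrow i
    | succ k ih =>
      intro i
      rw [hrrec, hrrec]
      exact Finset.sum_le_sum fun l _ => mul_le_mul_of_nonneg_left (ih l) (hMnn i l)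
  have hranti : ∀ i, Antitone fun k => r k i := fun i =>
    antitone_nat_of_succ_le fun k => hrstep k i
  have hrle1 : ∀ k i, r k i ≤ 1 := fun k i => (hr0 i) ▸ hranti i (Nat.zero_le k)
  -- nodes below Lnum have zero row already at power 1
  have hlow : ∀ i : Fin N, (i : ℕ) < Lnum → r 1 i < 1 := by
    intro i hi
    have : r 1 i = 0 := by
      rw [hrrec]
      exact Finset.sum_eq_zero fun l _ => by rw [hM0 i l hi]; ring
    rw [this]; norm_num
  -- reachability gives deficiency
  have hkey : ∀ j : Fin N, (j : ℕ) < Lnum → ∀ i : Fin N,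
      Relation.ReflTransGen (fun p q : Fin N => 0 < A q p) j i → ∃ k, r k i < 1 := by
    intro j hj i hreach
    induction hreach with
    | refl => exact ⟨1, hlow j hj⟩
    | @tail b c hjb hbc ih =>
      obtain ⟨k, hk⟩ := ih
      by_cases hc : (c : ℕ) < Lnum
      · exact ⟨1, hlow c hc⟩
      · refine ⟨k + 1, ?_⟩
        have hMcb : 0 < M c b := hMoff c b (not_lt.mp hc) hbc
        have hb : b ∈ Finset.univ := Finset.mem_univ b
        calc r (k + 1) c = ∑ l, M c l * r k l := hrrec k c
          _ = M c b * r k b + ∑ l ∈ Finset.univ.erase b, M c l * r k l := by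
              rw [← Finset.add_sum_erase _ _ hb]
          _ < M c b * 1 + ∑ l ∈ Finset.univ.erase b, M c l * 1 := by
              apply add_lt_add_of_lt_of_le
              · exact mul_lt_mul_of_pos_left hk hMcb
              · exact Finset.sum_le_sum fun l _ =>
                  mul_le_mul_of_nonneg_left (hrle1 k l) (hMnn c l)
          _ = ∑ l, M c l := by
              simp only [mul_one]
              rw [← Finset.add_sum_erase _ _ hb]
          _ ≤ 1 := hMrow c
  have hkey' : ∀ i : Fin N, ∃ k, r k i < 1 := by
    intro i
    by_cases hi : (i : ℕ) < Lnum
    · exact ⟨1, hlow i hi⟩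
    · obtain ⟨j, hj, hreach⟩ := hpath i (not_lt.mp hi)
      exact hkey j hj i hreach
  -- a uniform power
  set kf : Fin N → ℕ := fun i => Classical.choose (hkey' i) with hkfdef
  set K : ℕ := Finset.univ.sup kf with hKdef
  have hrK : ∀ i, r K i < 1 := by
    intro i
    have h1 : r (kf i) i < 1 := Classical.choose_spec (hkey' i)
    exact lt_of_le_of_lt (hranti i (Finset.le_sup (Finset.mem_univ i))) h1
  have hKne : K ≠ 0 := by
    intro h
    have := hrK ⟨0, hN⟩
    rw [h, hr0] at this
    exact lt_irrefl 1 this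
  -- from the spectrum to an eigenvector
  set B := (M.map (Complex.ofReal ·)) with hBdef
  have hz' : ¬ IsUnit ((z • 1 : Matrix (Fin N) (Fin N) ℂ) - B) := by
    have := spectrum.mem_iff.mp hz
    rwa [Algebra.algebraMap_eq_smul_one] at this
  have hdet : ((z • 1 : Matrix (Fin N) (Fin N) ℂ) - B).det = 0 := by
    by_contra h
    exact hz' ((Matrix.isUnit_iff_isUnit_det _).mpr (isUnit_iff_ne_zero.mpr h))
  obtain ⟨v, hv0, hv⟩ := Matrix.exists_mulVec_eq_zero_iff.mpr hdet
  have hBv : B.mulVec v = z • v := by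
    rw [Matrix.sub_mulVec, Matrix.smul_mulVec, Matrix.one_mulVec] at hv
    exact (sub_eq_zero.mp hv).symm
  have hBpow : ∀ k i j, (B ^ k) i j = (((M ^ k) i j : ℝ) : ℂ) := by
    intro k
    induction k with
    | zero => intro i j; simp [Matrix.one_apply]; split <;> simp
    | succ k ih =>
      intro i j
      rw [pow_succ', pow_succ', Matrix.mul_apply, Matrix.mul_apply]
      push_cast
      refine Finset.sum_congr rfl fun l _ => ?_
      rw [ih l j, hBdef]
      simp [Matrix.map_apply]
  have hBkv : ∀ k, (B ^ k).mulVec v = z ^ k • v := by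
    intro k
    induction k with
    | zero => simp [Matrix.one_mulVec]
    | succ k ih =>
      rw [pow_succ', ← Matrix.mulVec_mulVec, ih, Matrix.mulVec_smul, hBv, pow_succ,
        smul_smul, mul_comm]
  obtain ⟨m, -, hm⟩ := Finset.univ.exists_max_image (fun i => ‖v i‖)
    ⟨⟨0, hN⟩, Finset.mem_univ _⟩
  have hvm : 0 < ‖v m‖ := by
    obtain ⟨i, hi⟩ := Function.ne_iff.mp hv0
    have hi' : v i ≠ 0 := by simpa using hi
    exact lt_of_lt_of_le (norm_pos_iff.mpr hi') (hm i (Finset.mem_univ i))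
  have h1 : ((B ^ K).mulVec v) m = z ^ K * v m := by rw [hBkv]; simp
  have h2 : ((B ^ K).mulVec v) m = ∑ j, (((M ^ K) m j : ℝ) : ℂ) * v j := by
    rw [Matrix.mulVec, dotProduct]
    exact Finset.sum_congr rfl fun j _ => by rw [hBpow]
  have hmain : ‖z‖ ^ K * ‖v m‖ < ‖v m‖ := by
    calc ‖z‖ ^ K * ‖v m‖ = ‖z ^ K * v m‖ := by rw [norm_mul, norm_pow]
      _ = ‖∑ j, (((M ^ K) m j : ℝ) : ℂ) * v j‖ := by rw [← h1, h2]
      _ ≤ ∑ j, ‖(((M ^ K) m j : ℝ) : ℂ) * v j‖ := norm_sum_le _ _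
      _ = ∑ j, (M ^ K) m j * ‖v j‖ := by
          refine Finset.sum_congr rfl fun j _ => ?_
          rw [norm_mul, Complex.norm_real, Real.norm_eq_abs,
            abs_of_nonneg (hpownn K m j)]
      _ ≤ ∑ j, (M ^ K) m j * ‖v m‖ := Finset.sum_le_sum fun j _ =>
          mul_le_mul_of_nonneg_left (hm j (Finset.mem_univ j)) (hpownn K m j)
      _ = r K m * ‖v m‖ := by rw [hrdef, ← Finset.sum_mul]
      _ < 1 * ‖v m‖ := mul_lt_mul_of_pos_right (hrK m) hvm
      _ = ‖v m‖ := one_mul _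
  have hzK : ‖z‖ ^ K < 1 := by
    nlinarith [hmain, hvm]
  exact (pow_lt_one_iff_of_nonneg (norm_nonneg z) hKne).mp hzK
end

section
/- Consider the leader-following consensus iteration λ(k+1) = ε A_{*0} 1_N λ₀ + (I_N - ε(L + A_{*0})) λ(k) on ℝ^N, where L is the Laplacian of a weighted digraph on N nodes, A_{*0} = diag(a_{10},...,a_{N0}) with a_{i0} ∈ {0,1}, and ε = diag(ε_1,...,ε_N) with 0 < ε_i < 1/(Σ_{j=0}^N a_{ij}). If the augmented digraph on {0,1,...,N} (adding edges (0,i) for each i with a_{i0}=1) contains a spanning tree rooted at node 0, then λ(k) → λ₀ 1_N as k → ∞, for every initial condition λ(0). -/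
/-- leader-following consensus. If every follower is reachable
from the leader (node 0) and step sizes satisfy
`0 < ε_i < 1/(a_{i0} + Σ_j a_{ij})`, then every follower state converges to
the leader value `λ₀`. -/
theorem stmt10 (N : ℕ)
    (A : Matrix (Fin N) (Fin N) ℝ) (hA : ∀ i j, 0 ≤ A i j)
    (a0 : Fin N → ℝ) (ha0 : ∀ i, a0 i = 0 ∨ a0 i = 1)
    (ε : Fin N → ℝ) (hε : ∀ i, 0 < ε i ∧ ε i < 1 / (a0 i + ∑ j, A i j))
    (htree : ∀ i : Fin N, ∃ j : Fin N, a0 j = 1 ∧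
      Relation.ReflTransGen (fun p q : Fin N => 0 < A q p) j i)
    (lam0 : ℝ) (lam : ℕ → Fin N → ℝ)
    (hrec : ∀ k i, lam (k + 1) i = lam k i +
      ε i * ((∑ j, A i j * (lam k j - lam k i)) + a0 i * (lam0 - lam k i))) :
    ∀ i : Fin N, Filter.Tendsto (fun k => lam k i) Filter.atTop (nhds lam0) := by
  intro i0
  haveI : Nonempty (Fin N) := ⟨i0⟩
  -- error vector, row sums, diagonal coefficients
  set e : ℕ → Fin N → ℝ := fun k i => lam k i - lam0 with he
  set S : Fin N → ℝ := fun i => ∑ j, A i j with hS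
  set c : Fin N → ℝ := fun i => 1 - ε i * (a0 i + S i) with hc
  have hSnn : ∀ i, 0 ≤ S i := fun i => Finset.sum_nonneg fun j _ => hA i j
  have ha0nn : ∀ i, 0 ≤ a0 i := by
    intro i; rcases ha0 i with h | h <;> rw [h] <;> norm_num
  have hden : ∀ i, 0 < a0 i + S i := by
    intro i
    rcases lt_or_ge 0 (a0 i + S i) with h | h
    · exact h
    · exfalso
      have h0 : a0 i + S i = 0 := le_antisymm h (by have := ha0nn i; have := hSnn i; linarith)
      have := (hε i).2
      rw [h0] at this
      simp at this
      linarith [(hε i).1]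
  have hcpos : ∀ i, 0 < c i := by
    intro i
    have h2 := (hε i).2
    rw [lt_div_iff₀ (hden i)] at h2
    simp only [hc]
    linarith
  have hclt1 : ∀ i, c i < 1 := by
    intro i
    have : 0 < ε i * (a0 i + S i) := mul_pos (hε i).1 (hden i)
    simp only [hc]; linarith
  -- error recursion
  have erec : ∀ k i, e (k + 1) i = c i * e k i + ε i * ∑ j, A i j * e k j := by
    intro k i
    have h1 : ∑ j, A i j * (lam k j - lam k i)
        = (∑ j, A i j * (lam k j - lam0)) - (∑ j, A i j) * (lam k i - lam0) := by
      rw [Finset.sum_mul, ← Finset.sum_sub_distrib]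
      exact Finset.sum_congr rfl fun j _ => by ring
    simp only [he, hc, hS, hrec, h1]
    ring
  -- the max-norm
  set M : ℕ → ℝ := fun k => Finset.univ.sup' Finset.univ_nonempty fun i => |e k i| with hM
  have hMle : ∀ k i, |e k i| ≤ M k := fun k i =>
    Finset.le_sup' (f := fun i => |e k i|) (Finset.mem_univ i)
  have hMnn : ∀ k, 0 ≤ M k := fun k => le_trans (abs_nonneg _) (hMle k i0)
  -- general one-step bound
  have hstep : ∀ k (i : Fin N) (b : Fin N → ℝ), (∀ j, |e k j| ≤ b j) →
      |e (k + 1) i| ≤ c i * b i + ε i * ∑ j, A i j * b j := by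
    intro k i b hb
    rw [erec]
    calc |c i * e k i + ε i * ∑ j, A i j * e k j|
        ≤ |c i * e k i| + |ε i * ∑ j, A i j * e k j| := abs_add_le _ _
      _ ≤ c i * b i + ε i * ∑ j, A i j * b j := by
          apply add_le_add
          · rw [abs_mul, abs_of_pos (hcpos i)]
            exact mul_le_mul_of_nonneg_left (hb i) (le_of_lt (hcpos i))
          · rw [abs_mul, abs_of_pos (hε i).1]
            apply mul_le_mul_of_nonneg_left _ (le_of_lt (hε i).1)
            calc |∑ j, A i j * e k j| ≤ ∑ j, |A i j * e k j| :=
                  Finset.abs_sum_le_sum_abs _ _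
              _ ≤ ∑ j, A i j * b j := by
                  apply Finset.sum_le_sum
                  intro j _
                  rw [abs_mul, abs_of_nonneg (hA i j)]
                  exact mul_le_mul_of_nonneg_left (hb j) (hA i j)
  -- basic one-step bound : |e (k+1) i| ≤ (1 - ε i * a0 i) * M k
  have hstep1 : ∀ k i, |e (k + 1) i| ≤ (1 - ε i * a0 i) * M k := by
    intro k i
    have := hstep k i (fun _ => M k) (fun j => hMle k j)
    calc |e (k + 1) i| ≤ c i * M k + ε i * ∑ j, A i j * M k := this
      _ = (1 - ε i * a0 i) * M k := by
          rw [← Finset.sum_mul]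
          simp only [hc, ← hS]
          ring
  -- montonicity of M
  have hMmono : ∀ {k l : ℕ}, k ≤ l → M l ≤ M k := by
    have hsucc : ∀ k, M (k + 1) ≤ M k := by
      intro k
      apply Finset.sup'_le
      intro i _
      refine le_trans (hstep1 k i) ?_
      have h1 : 1 - ε i * a0 i ≤ 1 := by
        have : 0 ≤ ε i * a0 i := mul_nonneg (le_of_lt (hε i).1) (ha0nn i)
        linarith
      nlinarith [hMnn k]
    intro k l hkl
    exact antitone_nat_of_succ_le hsucc hkl
  -- improvement propagation (persistence at a node)
  have hpersist : ∀ (k0 k : ℕ) (p : Fin N) (θ : ℝ), 0 ≤ θ → k0 ≤ k →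
      |e k p| ≤ (1 - θ) * M k0 → |e (k + 1) p| ≤ (1 - c p * θ) * M k0 := by
    intro k0 k p θ hθ hk hep
    set b : Fin N → ℝ := fun j => if j = p then (1 - θ) * M k0 else M k0 with hb
    have hble : ∀ j, |e k j| ≤ b j := by
      intro j
      by_cases hj : j = p
      · subst hj; simpa [hb] using hep
      · simp only [hb, if_neg hj]
        exact le_trans (hMle k j) (hMmono hk)
    have hbM : ∀ j, b j ≤ M k0 := by
      intro j
      by_cases hj : j = p
      · simp only [hb, hj, if_true]; nlinarith [hMnn k0]
      · simp only [hb, if_neg hj]; exact le_refl _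
    refine le_trans (hstep k p b hble) ?_
    have hsum : ∑ j, A p j * b j ≤ S p * M k0 := by
      rw [hS, Finset.sum_mul]
      exact Finset.sum_le_sum fun j _ => mul_le_mul_of_nonneg_left (hbM j) (hA p j)
    have hbp : b p = (1 - θ) * M k0 := by simp [hb]
    rw [hbp]
    have h2 : c p * ((1 - θ) * M k0) + ε p * ∑ j, A p j * b j
        ≤ c p * ((1 - θ) * M k0) + ε p * (S p * M k0) := by
      apply add_le_add le_rfl
      exact mul_le_mul_of_nonneg_left hsum (le_of_lt (hε p).1)
    refine le_trans h2 ?_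
    have hc1 : c p + ε p * S p ≤ 1 := by
      have : 0 ≤ ε p * a0 p := mul_nonneg (le_of_lt (hε p).1) (ha0nn p)
      simp only [hc]; nlinarith
    nlinarith [hMnn k0, hcpos p]
  -- improvement propagation along an edge
  have hedge : ∀ (k0 k : ℕ) (p q : Fin N) (θ : ℝ), 0 ≤ θ → k0 ≤ k →
      |e k p| ≤ (1 - θ) * M k0 →
      |e (k + 1) q| ≤ (1 - ε q * A q p * θ) * M k0 := by
    intro k0 k p q θ hθ hk hep
    set b : Fin N → ℝ := fun j => if j = p then (1 - θ) * M k0 else M k0 with hb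
    have hble : ∀ j, |e k j| ≤ b j := by
      intro j
      by_cases hj : j = p
      · subst hj; simpa [hb] using hep
      · simp only [hb, if_neg hj]
        exact le_trans (hMle k j) (hMmono hk)
    refine le_trans (hstep k q b hble) ?_
    have hsum : ∑ j, A q j * b j = S q * M k0 - A q p * (θ * M k0) := by
      have : ∀ j, A q j * b j = A q j * M k0 - A q j * (if j = p then θ * M k0 else 0) := by
        intro j
        by_cases hj : j = p <;> simp [hb, hj] <;> ring
      rw [Finset.sum_congr rfl fun j _ => this j, Finset.sum_sub_distrib]
      congr 1
      · rw [hS, Finset.sum_mul]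
      · rw [Finset.sum_eq_single p]
        · simp
        · intro j _ hj; simp [hj]
        · intro h; exact absurd (Finset.mem_univ p) h
    rw [hsum]
    have hbq : b q ≤ M k0 := by
      by_cases hj : q = p
      · simp only [hb, hj, if_true]; nlinarith [hMnn k0]
      · simp only [hb, if_neg hj]; exact le_refl _
    have hc1 : c q + ε q * S q ≤ 1 := by
      have : 0 ≤ ε q * a0 q := mul_nonneg (le_of_lt (hε q).1) (ha0nn q)
      simp only [hc]; nlinarith
    have h3 : c q * b q ≤ c q * M k0 :=
      mul_le_mul_of_nonneg_left hbq (le_of_lt (hcpos q))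
    nlinarith [hMnn k0, (hε q).1, hcpos q]
  -- per-node improvement claim
  have hP : ∀ i : Fin N, ∃ t : ℕ, 1 ≤ t ∧ ∃ θ : ℝ, 0 < θ ∧ θ ≤ 1 ∧
      ∀ k0, |e (k0 + t) i| ≤ (1 - θ) * M k0 := by
    intro i
    obtain ⟨j, hj1, hpath⟩ := htree i
    induction hpath with
    | refl =>
        refine ⟨1, le_refl 1, ε j, (hε j).1, ?_, ?_⟩
        · have h2 := (hε j).2
          have hd : (1 : ℝ) ≤ a0 j + S j := by rw [hj1]; linarith [hSnn j]
          have : 1 / (a0 j + S j) ≤ 1 := by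
            rw [div_le_one (hden j)]; exact hd
          linarith
        · intro k0
          have h := hstep1 k0 j
          rw [hj1, mul_one] at h
          simpa using h
    | @tail b q hab hbc ih =>
        obtain ⟨t, ht1, θ, hθpos, hθ1, hbound⟩ := ih
        refine ⟨t + 1, by omega, ε q * A q b * θ, ?_, ?_, ?_⟩
        · exact mul_pos (mul_pos (hε q).1 hbc) hθpos
        · -- ε q * A q b ≤ ε q * S q < 1, and θ ≤ 1
          have hAS : A q b ≤ S q := by
            rw [hS]
            exact Finset.single_le_sum (f := fun j => A q j) (fun j _ => hA q j)
              (Finset.mem_univ b)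
          have h2 := (hε q).2
          rw [lt_div_iff₀ (hden q)] at h2
          have hεq := (hε q).1
          have : ε q * A q b ≤ ε q * (a0 q + S q) := by
            apply mul_le_mul_of_nonneg_left _ (le_of_lt hεq)
            linarith [ha0nn q]
          nlinarith
        · intro k0
          have hkk : k0 ≤ k0 + t := Nat.le_add_right _ _
          have := hedge k0 (k0 + t) b q θ (le_of_lt hθpos) hkk (hbound k0)
          simpa [add_assoc] using this
  -- extract witness functions
  choose t ht1 θ hθpos hθ1 hbound using hP
  -- uniform horizon
  set T : ℕ := Finset.univ.sup t with hT
  have htT : ∀ i, t i ≤ T := fun i => Finset.le_sup (Finset.mem_univ i)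
  have hT1 : 1 ≤ T := le_trans (ht1 i0) (htT i0)
  -- persistence over the remaining time
  have hpersn : ∀ (i : Fin N) (k0 s : ℕ),
      |e (k0 + t i + s) i| ≤ (1 - c i ^ s * θ i) * M k0 := by
    intro i k0 s
    induction s with
    | zero => simpa using hbound i k0
    | succ s ih =>
        have hθs : 0 ≤ c i ^ s * θ i :=
          mul_nonneg (pow_nonneg (le_of_lt (hcpos i)) s) (le_of_lt (hθpos i))
        have hk : k0 ≤ k0 + t i + s := by omega
        have := hpersist k0 (k0 + t i + s) i (c i ^ s * θ i) hθs hk ih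
        calc |e (k0 + t i + (s + 1)) i| = |e (k0 + t i + s + 1) i| := by ring_nf
          _ ≤ (1 - c i * (c i ^ s * θ i)) * M k0 := this
          _ = (1 - c i ^ (s + 1) * θ i) * M k0 := by ring
  -- uniform contraction factor
  set δ : ℝ := Finset.univ.inf' Finset.univ_nonempty fun i => c i ^ T * θ i with hδ
  have hδpos : 0 < δ := by
    rw [hδ]
    apply (Finset.lt_inf'_iff _).mpr
    intro i _
    exact mul_pos (pow_pos (hcpos i) T) (hθpos i)
  have hδ1 : δ ≤ 1 := by
    have h1 : δ ≤ c i0 ^ T * θ i0 := Finset.inf'_le _ (Finset.mem_univ i0)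
    have h2 : c i0 ^ T ≤ 1 := pow_le_one₀ (le_of_lt (hcpos i0)) (le_of_lt (hclt1 i0))
    nlinarith [hθpos i0, hθ1 i0, pow_pos (hcpos i0) T]
  -- contraction of M over horizon T
  have hcontr : ∀ k0, M (k0 + T) ≤ (1 - δ) * M k0 := by
    intro k0
    apply Finset.sup'_le
    intro i _
    have hs : k0 + T = k0 + t i + (T - t i) := by have := htT i; omega
    have h1 := hpersn i k0 (T - t i)
    rw [← hs] at h1
    refine le_trans h1 ?_
    have h2 : δ ≤ c i ^ (T - t i) * θ i := by
      refine le_trans (Finset.inf'_le _ (Finset.mem_univ i)) ?_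
      apply mul_le_mul_of_nonneg_right _ (le_of_lt (hθpos i))
      exact pow_le_pow_of_le_one (le_of_lt (hcpos i)) (le_of_lt (hclt1 i))
        (by have := htT i; omega)
    nlinarith [hMnn k0]
  -- geometric decay along multiples of T
  have hgeom : ∀ n : ℕ, M (T * n) ≤ (1 - δ) ^ n * M 0 := by
    intro n
    induction n with
    | zero => simp
    | succ n ih =>
        have : T * (n + 1) = T * n + T := by ring
        rw [this]
        refine le_trans (hcontr (T * n)) ?_
        have h1 : (0 : ℝ) ≤ 1 - δ := by linarith
        calc (1 - δ) * M (T * n) ≤ (1 - δ) * ((1 - δ) ^ n * M 0) :=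
              mul_le_mul_of_nonneg_left ih h1
          _ = (1 - δ) ^ (n + 1) * M 0 := by ring
  -- squeeze: M k ≤ (1-δ)^(k/T) * M 0
  have hMk : ∀ k, M k ≤ (1 - δ) ^ (k / T) * M 0 := by
    intro k
    have h1 : T * (k / T) ≤ k := Nat.mul_div_le k T
    exact le_trans (hMmono h1) (hgeom (k / T))
  have hdiv : Filter.Tendsto (fun k : ℕ => k / T) Filter.atTop Filter.atTop := by
    apply Filter.tendsto_atTop_atTop.mpr
    intro b
    refine ⟨b * T, fun a ha => ?_⟩
    rw [Nat.le_div_iff_mul_le (by omega : 0 < T)]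
    exact ha
  have hpow : Filter.Tendsto (fun k : ℕ => (1 - δ) ^ (k / T) * M 0)
      Filter.atTop (nhds 0) := by
    have h1 : Filter.Tendsto (fun n : ℕ => (1 - δ) ^ n) Filter.atTop (nhds 0) := by
      apply tendsto_pow_atTop_nhds_zero_of_lt_one (by linarith) (by linarith)
    have h2 := (h1.comp hdiv).mul_const (M 0)
    simpa using h2
  have hMten : Filter.Tendsto M Filter.atTop (nhds 0) := by
    refine tendsto_of_tendsto_of_tendsto_of_le_of_le tendsto_const_nhds hpow hMnn hMk
  have hnegten : Filter.Tendsto (fun k => -(M k)) Filter.atTop (nhds 0) := by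
    simpa using hMten.neg
  have heten : Filter.Tendsto (fun k => e k i0) Filter.atTop (nhds 0) := by
    refine tendsto_of_tendsto_of_tendsto_of_le_of_le
      hnegten hMten (fun k => ?_) (fun k => ?_)
    · exact neg_le_of_abs_le (hMle k i0)
    · exact le_of_abs_le (hMle k i0)
  have : Filter.Tendsto (fun k => e k i0 + lam0) Filter.atTop (nhds (0 + lam0)) :=
    heten.add_const lam0
  rw [zero_add] at this
  refine this.congr fun k => ?_
  simp [he]
end

section
/- Under the leader-following consensus hypotheses (augmented digraph has a spanning tree rooted at the leader node 0, and 0 < ε_i < 1/Σ_{j=0}^N a_{ij}), all eigenvalues of the matrix I_N - ε(L + A_{*0}) lie strictly inside the unit disk, where ε = diag(ε_1,...,ε_N), L is the follower-graph Laplacian and A_{*0} = diag(a_{10},...,a_{N0}). -/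
/-- under the leader-following hypotheses, all eigenvalues of
`I - ε(L + A_{*0})` are strictly inside the unit disk. -/
theorem stmt11 (N : ℕ)
    (A : Matrix (Fin N) (Fin N) ℝ) (hA : ∀ i j, 0 ≤ A i j)
    (a0 : Fin N → ℝ) (ha0 : ∀ i, a0 i = 0 ∨ a0 i = 1)
    (ε : Fin N → ℝ) (hε : ∀ i, 0 < ε i ∧ ε i < 1 / (a0 i + ∑ j, A i j))
    (htree : ∀ i : Fin N, ∃ j : Fin N, a0 j = 1 ∧
      Relation.ReflTransGen (fun p q : Fin N => 0 < A q p) j i)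
    (Lap : Matrix (Fin N) (Fin N) ℝ)
    (hLap : Lap = Matrix.diagonal (fun i => ∑ j, A i j) - A) :
    ∀ z ∈ spectrum ℂ
      ((1 - Matrix.diagonal ε * (Lap + Matrix.diagonal a0)).map
        (Complex.ofReal ·)), ‖z‖ < 1 := by
  intro z hz
  set M : Matrix (Fin N) (Fin N) ℝ :=
    1 - Matrix.diagonal ε * (Lap + Matrix.diagonal a0) with hM
  -- basic facts about ε and row sums
  have hεpos : ∀ i, 0 < ε i := fun i => (hε i).1
  have ha0nn : ∀ i, 0 ≤ a0 i := by
    intro i; rcases ha0 i with h | h <;> rw [h] <;> norm_num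
  have hεb : ∀ i, ε i * (a0 i + ∑ j, A i j) < 1 := by
    intro i
    obtain ⟨hp, hu⟩ := hε i
    have hcpos : 0 < a0 i + ∑ j, A i j := by
      by_contra h
      push_neg at h
      have : 1 / (a0 i + ∑ j, A i j) ≤ 0 := one_div_nonpos.mpr h
      linarith
    exact (lt_div_iff₀ hcpos).mp hu
  -- entrywise formula for M
  have hMentry : ∀ i j, M i j =
      (if i = j then (1 : ℝ) - ε i * (∑ k, A i k) - ε i * a0 i else 0)
        + ε i * A i j := by
    intro i j
    by_cases h : i = j <;>
      simp [hM, hLap, Matrix.sub_apply, Matrix.add_apply, Matrix.one_apply,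
        Matrix.diagonal_mul, Matrix.diagonal_apply, h] <;> ring
  -- nonnegativity of M
  have hMnn : ∀ i j, 0 ≤ M i j := by
    intro i j
    rw [hMentry i j]
    by_cases h : i = j
    · subst h
      have h1 := hεb i
      have h2 : 0 ≤ ε i * A i i := mul_nonneg (hεpos i).le (hA i i)
      simp only [if_pos rfl, if_true]
      nlinarith
    · simp only [if_neg h, zero_add]
      exact mul_nonneg (hεpos i).le (hA i j)
  -- row sums
  have hrow : ∀ i, ∑ j, M i j = 1 - ε i * a0 i := by
    intro i
    have : ∑ j, M i j =
        ∑ j, ((if i = j then (1 : ℝ) - ε i * (∑ k, A i k) - ε i * a0 i else 0)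
          + ε i * A i j) := by
      exact Finset.sum_congr rfl fun j _ => hMentry i j
    rw [this, Finset.sum_add_distrib, Finset.sum_ite_eq Finset.univ i
      (fun _ => (1 : ℝ) - ε i * (∑ k, A i k) - ε i * a0 i), ← Finset.mul_sum]
    simp
    ring
  -- suppose ‖z‖ ≥ 1
  by_contra hlt
  push_neg at hlt
  -- eigenvector
  have hz' : z ∈ spectrum ℂ
      (Matrix.toLinAlgEquiv' (M.map (Complex.ofReal ·))) := by
    rw [AlgEquiv.spectrum_eq]; exact hz
  have heig : Module.End.HasEigenvalue
      (Matrix.toLinAlgEquiv' (M.map (Complex.ofReal ·))) z :=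
    Module.End.hasEigenvalue_iff_mem_spectrum.mpr hz'
  obtain ⟨v, hv⟩ := heig.exists_hasEigenvector
  have hveq : (M.map (Complex.ofReal ·)).mulVec v = z • v := by
    have := hv.apply_eq_smul
    rwa [Matrix.toLinAlgEquiv'_apply] at this
  have hvne : v ≠ 0 := hv.right
  -- max modulus index
  obtain ⟨i1, hi1⟩ := Function.ne_iff.mp hvne
  have hNE : (Finset.univ : Finset (Fin N)).Nonempty := ⟨i1, Finset.mem_univ i1⟩
  obtain ⟨i0, -, hi0⟩ := Finset.exists_max_image Finset.univ (fun i => ‖v i‖) hNE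
  set m : ℝ := ‖v i0‖ with hm
  have hmax : ∀ j, ‖v j‖ ≤ m := fun j => hi0 j (Finset.mem_univ j)
  have hmpos : 0 < m :=
    lt_of_lt_of_le (norm_pos_iff.mpr hi1) (hmax i1)
  -- key claim: any max-modulus index k has a0 k = 0 and all its in-neighbors
  -- also have maximal modulus
  have key : ∀ k, ‖v k‖ = m → a0 k = 0 ∧ ∀ j, 0 < M k j → ‖v j‖ = m := by
    intro k hk
    have hrowk : ((M.map (Complex.ofReal ·)).mulVec v) k = z * v k := by
      rw [hveq]; rfl
    have hsum : (∑ j, (M k j : ℂ) * v j) = z * v k := by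
      rw [← hrowk]; rfl
    have h1 : m ≤ ∑ j, M k j * ‖v j‖ := by
      calc m = 1 * ‖v k‖ := by rw [one_mul, hk]
        _ ≤ ‖z‖ * ‖v k‖ := by
            apply mul_le_mul_of_nonneg_right hlt (norm_nonneg _)
        _ = ‖z * v k‖ := (norm_mul z (v k)).symm
        _ = ‖∑ j, (M k j : ℂ) * v j‖ := by rw [hsum]
        _ ≤ ∑ j, ‖(M k j : ℂ) * v j‖ := norm_sum_le _ _
        _ = ∑ j, M k j * ‖v j‖ := by
            apply Finset.sum_congr rfl
            intro j _
            rw [norm_mul, Complex.norm_real, Real.norm_eq_abs,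
              abs_of_nonneg (hMnn k j)]
    have h2 : ∑ j, M k j * ‖v j‖ ≤ ∑ j, M k j * m := by
      apply Finset.sum_le_sum
      intro j _
      exact mul_le_mul_of_nonneg_left (hmax j) (hMnn k j)
    have h3 : ∑ j, M k j * m = (1 - ε k * a0 k) * m := by
      rw [← Finset.sum_mul, hrow]
    have ha0k : a0 k = 0 := by
      rcases ha0 k with h | h
      · exact h
      · exfalso
        rw [h] at h3
        nlinarith [hεpos k]
    refine ⟨ha0k, ?_⟩
    have h4 : ∑ j, M k j * (m - ‖v j‖) = 0 := by
      have hle : ∑ j, M k j * (m - ‖v j‖) ≤ 0 := by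
        have : ∑ j, M k j * (m - ‖v j‖)
            = (∑ j, M k j * m) - ∑ j, M k j * ‖v j‖ := by
          rw [← Finset.sum_sub_distrib]
          apply Finset.sum_congr rfl
          intro j _; ring
        rw [this, h3, ha0k]
        simp only [mul_zero, sub_zero, one_mul]
        linarith
      have hge : 0 ≤ ∑ j, M k j * (m - ‖v j‖) := by
        apply Finset.sum_nonneg
        intro j _
        exact mul_nonneg (hMnn k j) (by linarith [hmax j])
      linarith
    intro j hj
    have := (Finset.sum_eq_zero_iff_of_nonneg
      (fun j _ => mul_nonneg (hMnn k j) (by linarith [hmax j]))).mp h4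
      j (Finset.mem_univ j)
    have hdiff : m - ‖v j‖ = 0 := by
      rcases mul_eq_zero.mp this with h | h
      · exact absurd h (ne_of_gt hj)
      · exact h
    linarith [hmax j]
  -- propagation along edges
  have prop : ∀ p q : Fin N, 0 < A q p → ‖v q‖ = m → ‖v p‖ = m := by
    intro p q hApq hq
    by_cases hpq : q = p
    · rw [← hpq]; exact hq
    · apply (key q hq).2 p
      rw [hMentry q p, if_neg hpq, zero_add]
      exact mul_pos (hεpos q) hApq
  -- reachability propagation
  have reach : ∀ (j i : Fin N),
      Relation.ReflTransGen (fun p q : Fin N => 0 < A q p) j i →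
      ‖v i‖ = m → ‖v j‖ = m := by
    intro j i h
    induction h with
    | refl => exact id
    | tail _ hbc ih => intro hc; exact ih (prop _ _ hbc hc)
  -- contradiction
  obtain ⟨j, hj1, hj2⟩ := htree i0
  have hjm : ‖v j‖ = m := reach j i0 hj2 rfl
  have := (key j hjm).1
  rw [hj1] at this
  norm_num at this
end

section
/- Consider the coupled iteration λ(k+1) = (I_N - ε' L) λ(k) + σ(k) ΔP̂(k) on ℝ^N, where L is the Laplacian of a connected weighted undirected graph, 0 < ε' < 1/max_i Σ_j a_ij (scalar step for simplicity), σ(k) > 0 with σ(k) → 0, and (ΔP̂(k)) is a sequence with sup_k ‖(I_N - J_N) ΔP̂(k)‖ < ∞. Then the disagreement δ_λ(k) = (I_N - J_N) λ(k) converges to 0, i.e., λ_i(k) - λ_j(k) → 0 for all i, j. -/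
open Filter Finset Matrix

private lemma aux_sqsum_mulVec {N : ℕ} (P : Matrix (Fin N) (Fin N) ℝ) (x : Fin N → ℝ) :
    ∑ i, (P.mulVec x i)^2 = ∑ j, ∑ k, (Pᵀ * P) j k * (x j * x k) := by
  have h1 : ∀ i, (P.mulVec x i)^2 = ∑ j, ∑ k, P i j * P i k * (x j * x k) := by
    intro i
    have : P.mulVec x i = ∑ j, P i j * x j := by
      simp [Matrix.mulVec, dotProduct]
    rw [this, sq, Finset.sum_mul_sum]
    exact Finset.sum_congr rfl fun j _ => Finset.sum_congr rfl fun k _ => by ring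
  simp only [h1]
  rw [Finset.sum_comm]
  refine Finset.sum_congr rfl fun j _ => ?_
  rw [Finset.sum_comm]
  refine Finset.sum_congr rfl fun k _ => ?_
  rw [Matrix.mul_apply, Finset.sum_mul]
  exact Finset.sum_congr rfl fun i _ => by simp [Matrix.transpose_apply]

private lemma aux_quad {N : ℕ} (Q : Matrix (Fin N) (Fin N) ℝ)
    (hQrow : ∀ i, ∑ j, Q i j = 1) (hQcol : ∀ j, ∑ i, Q i j = 1) (x : Fin N → ℝ) :
    ∑ j, ∑ k, Q j k * (x j * x k)
      = ∑ i, (x i)^2 - (1/2) * ∑ j, ∑ k, Q j k * (x j - x k)^2 := by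
  have key : ∑ j, ∑ k, Q j k * (x j - x k)^2
      = 2 * ∑ i, (x i)^2 - 2 * ∑ j, ∑ k, Q j k * (x j * x k) := by
    have e1 : ∀ j k, Q j k * (x j - x k)^2
        = Q j k * (x j)^2 + Q j k * (x k)^2 - 2 * (Q j k * (x j * x k)) := by
      intro j k; ring
    simp only [e1, Finset.sum_sub_distrib, Finset.sum_add_distrib, ← Finset.mul_sum]
    have h2 : ∑ j, ∑ k, Q j k * (x j)^2 = ∑ i, (x i)^2 := by
      refine Finset.sum_congr rfl fun j _ => ?_
      rw [← Finset.sum_mul, hQrow j, one_mul]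
    have h3 : ∑ j, ∑ k, Q j k * (x k)^2 = ∑ i, (x i)^2 := by
      rw [Finset.sum_comm]
      refine Finset.sum_congr rfl fun k _ => ?_
      rw [← Finset.sum_mul, hQcol k, one_mul]
    rw [h2, h3]; ring
  linarith [key]

private lemma aux_pen_pos {N : ℕ} (Q : Matrix (Fin N) (Fin N) ℝ)
    (hQ0 : ∀ i j, 0 ≤ Q i j) (x : Fin N → ℝ) {p q : Fin N}
    (hpq : 0 < Q p q) (hx : x p ≠ x q) :
    0 < ∑ j, ∑ k, Q j k * (x j - x k)^2 := by
  have hterm : ∀ j k, 0 ≤ Q j k * (x j - x k)^2 :=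
    fun j k => mul_nonneg (hQ0 j k) (sq_nonneg _)
  have hinner : ∀ j, 0 ≤ ∑ k, Q j k * (x j - x k)^2 :=
    fun j => Finset.sum_nonneg fun k _ => hterm j k
  refine Finset.sum_pos' (fun j _ => hinner j) ⟨p, Finset.mem_univ p, ?_⟩
  have h1 : 0 < Q p q * (x p - x q)^2 :=
    mul_pos hpq (pow_pos (abs_pos.mpr (sub_ne_zero.mpr hx)) 2 |>.trans_eq (by rw [sq_abs]))
  calc (0:ℝ) < Q p q * (x p - x q)^2 := h1
    _ ≤ ∑ k, Q p k * (x p - x k)^2 :=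
      Finset.single_le_sum (f := fun k => Q p k * (x p - x k)^2)
        (fun k _ => hterm p k) (Finset.mem_univ q)

private lemma aux_abs_le_sqrt {N : ℕ} (u : Fin N → ℝ) (i : Fin N) :
    |u i| ≤ Real.sqrt (∑ j, (u j)^2) := by
  rw [← Real.sqrt_sq_eq_abs]
  exact Real.sqrt_le_sqrt (Finset.single_le_sum (f := fun j => (u j)^2)
    (fun j _ => sq_nonneg _) (Finset.mem_univ i))

private lemma aux_contraction {N : ℕ} (P : Matrix (Fin N) (Fin N) ℝ)
    (hP0 : ∀ i j, 0 ≤ P i j) (hPs : ∀ i j, P j i = P i j)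
    (hProw : ∀ i, ∑ j, P i j = 1)
    (hedge : ∀ x : Fin N → ℝ, (∑ i, x i = 0) → x ≠ 0 →
      ∃ p q, 0 < (Pᵀ * P) p q ∧ x p ≠ x q) :
    ∃ ρ : ℝ, 0 ≤ ρ ∧ ρ < 1 ∧ ∀ x : Fin N → ℝ, (∑ i, x i = 0) →
      Real.sqrt (∑ i, (P.mulVec x i)^2) ≤ ρ * Real.sqrt (∑ i, (x i)^2) := by
  have hPcol : ∀ j, ∑ i, P i j = 1 := by
    intro j
    calc ∑ i, P i j = ∑ i, P j i := Finset.sum_congr rfl fun i _ => hPs j i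
      _ = 1 := hProw j
  set Q := Pᵀ * P with hQdef
  have hQ0 : ∀ i j, 0 ≤ Q i j := by
    intro i j
    simp only [hQdef, Matrix.mul_apply, Matrix.transpose_apply]
    exact Finset.sum_nonneg fun k _ => mul_nonneg (hP0 k i) (hP0 k j)
  have hQrow : ∀ i, ∑ j, Q i j = 1 := by
    intro i
    simp only [hQdef, Matrix.mul_apply, Matrix.transpose_apply]
    rw [Finset.sum_comm]
    calc ∑ k, ∑ j, P k i * P k j = ∑ k, P k i := by
          refine Finset.sum_congr rfl fun k _ => ?_
          rw [← Finset.mul_sum, hProw k, mul_one]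
      _ = 1 := hPcol i
  have hQcol : ∀ j, ∑ i, Q i j = 1 := by
    intro j
    simp only [hQdef, Matrix.mul_apply, Matrix.transpose_apply]
    rw [Finset.sum_comm]
    calc ∑ k, ∑ i, P k i * P k j = ∑ k, P k j := by
          refine Finset.sum_congr rfl fun k _ => ?_
          rw [← Finset.sum_mul, hProw k, one_mul]
      _ = 1 := hPcol j
  -- pointwise strict contraction
  have hstrict : ∀ x : Fin N → ℝ, (∑ i, x i = 0) → x ≠ 0 →
      ∑ i, (P.mulVec x i)^2 < ∑ i, (x i)^2 := by
    intro x hsum hx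
    obtain ⟨p, q, hpq, hxpq⟩ := hedge x hsum hx
    have hpen := aux_pen_pos Q hQ0 x hpq hxpq
    rw [aux_sqsum_mulVec, aux_quad Q hQrow hQcol x]
    linarith
  -- weak contraction (≤) everywhere with sum zero
  have hweak : ∀ x : Fin N → ℝ, (∑ i, x i = 0) →
      ∑ i, (P.mulVec x i)^2 ≤ ∑ i, (x i)^2 := by
    intro x hsum
    by_cases hx : x = 0
    · subst hx; simp
    · exact le_of_lt (hstrict x hsum hx)
  set K : Set (Fin N → ℝ) := {x | (∑ i, x i = 0) ∧ ∑ i, (x i)^2 = 1} with hK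
  by_cases hKne : K.Nonempty
  · -- compactness
    have hcont : Continuous fun x : Fin N → ℝ => ∑ i, (P.mulVec x i)^2 := by
      apply continuous_finset_sum
      intro i _
      have h : Continuous fun x : Fin N → ℝ => P.mulVec x i := by
        simp only [Matrix.mulVec, dotProduct]
        exact continuous_finset_sum _ fun j _ => continuous_const.mul (continuous_apply j)
      exact h.pow 2
    have hclosed : IsClosed K := by
      have h1 : IsClosed {x : Fin N → ℝ | ∑ i, x i = 0} :=
        isClosed_eq (continuous_finset_sum _ fun i _ => continuous_apply i) continuous_const
      have h2 : IsClosed {x : Fin N → ℝ | ∑ i, (x i)^2 = 1} :=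
        isClosed_eq (continuous_finset_sum _ fun i _ => (continuous_apply i).pow 2)
          continuous_const
      exact h1.inter h2
    have hbounded : Bornology.IsBounded K := by
      apply (Metric.isBounded_closedBall (x := (0 : Fin N → ℝ)) (r := 1)).subset
      intro x hx
      rw [Metric.mem_closedBall, dist_zero_right]
      rw [pi_norm_le_iff_of_nonneg zero_le_one]
      intro i
      have := aux_abs_le_sqrt x i
      rw [hx.2, Real.sqrt_one] at this
      simpa [Real.norm_eq_abs] using this
    have hcomp : IsCompact K := Metric.isCompact_of_isClosed_isBounded hclosed hbounded
    obtain ⟨x₀, hx₀K, hmax⟩ := hcomp.exists_isMaxOn hKne hcont.continuousOn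
    set ρ2 : ℝ := ∑ i, (P.mulVec x₀ i)^2 with hρ2
    have hρ2nonneg : 0 ≤ ρ2 := Finset.sum_nonneg fun i _ => sq_nonneg _
    have hx₀ne : x₀ ≠ 0 := by
      intro h
      have h2 := hx₀K.2
      rw [h] at h2
      simp at h2
    have hρ2lt : ρ2 < 1 := by
      have := hstrict x₀ hx₀K.1 hx₀ne
      rw [hx₀K.2] at this
      exact this
    refine ⟨Real.sqrt ρ2, Real.sqrt_nonneg _, ?_, ?_⟩
    · rw [show (1:ℝ) = Real.sqrt 1 by rw [Real.sqrt_one]]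
      exact Real.sqrt_lt_sqrt hρ2nonneg hρ2lt
    · intro x hsum
      by_cases hx : x = 0
      · subst hx; simp
      · have hs : 0 < ∑ i, (x i)^2 := by
          obtain ⟨i, hi⟩ : ∃ i, x i ≠ 0 := by
            by_contra h
            push_neg at h
            exact hx (funext h)
          refine Finset.sum_pos' (fun j _ => sq_nonneg _) ⟨i, Finset.mem_univ i, ?_⟩
          exact pow_pos (abs_pos.mpr hi) 2 |>.trans_eq (by rw [sq_abs])
        set s := ∑ i, (x i)^2 with hsdef
        set t : ℝ := (Real.sqrt s)⁻¹ with ht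
        have hsqrts : 0 < Real.sqrt s := Real.sqrt_pos.mpr hs
        have hyK : (fun i => t * x i) ∈ K := by
          constructor
          · rw [← Finset.mul_sum, hsum, mul_zero]
          · have : ∑ i, (t * x i)^2 = t^2 * s := by
              rw [Finset.mul_sum]
              exact Finset.sum_congr rfl fun i _ => by ring
            rw [this, ht, hsdef]
            rw [← Real.sqrt_inv]
            rw [Real.sq_sqrt (inv_nonneg.mpr hs.le)]
            exact inv_mul_cancel₀ (ne_of_gt hs)
        have hgy := hmax hyK
        have hmv : ∀ i, P.mulVec (fun i => t * x i) i = t * P.mulVec x i := by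
          intro i
          have : (fun i => t * x i) = t • x := by funext i; simp
          rw [this, Matrix.mulVec_smul]
          simp
        have hgy' : ∑ i, (P.mulVec (fun i => t * x i) i)^2
            = t^2 * ∑ i, (P.mulVec x i)^2 := by
          rw [Finset.mul_sum]
          exact Finset.sum_congr rfl fun i _ => by rw [hmv i]; ring
        rw [Set.mem_setOf_eq] at hgy
        change ∑ i, (P.mulVec (fun i => t * x i) i)^2 ≤ ρ2 at hgy
        rw [hgy'] at hgy
        have ht2 : t^2 = s⁻¹ := by
          rw [ht, ← Real.sqrt_inv, Real.sq_sqrt (inv_nonneg.mpr hs.le)]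
        rw [ht2] at hgy
        have hfin : ∑ i, (P.mulVec x i)^2 ≤ ρ2 * s := by
          rw [inv_mul_le_iff₀ hs] at hgy
          linarith [hgy]
        calc Real.sqrt (∑ i, (P.mulVec x i)^2) ≤ Real.sqrt (ρ2 * s) := Real.sqrt_le_sqrt hfin
          _ = Real.sqrt ρ2 * Real.sqrt s := Real.sqrt_mul hρ2nonneg s
  · -- K empty : every sum-zero vector is 0
    refine ⟨1/2, by norm_num, by norm_num, ?_⟩
    intro x hsum
    by_cases hx : x = 0
    · subst hx; simp
    · exfalso
      apply hKne
      have hs : 0 < ∑ i, (x i)^2 := by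
        obtain ⟨i, hi⟩ : ∃ i, x i ≠ 0 := by
          by_contra h; push_neg at h; exact hx (funext h)
        refine Finset.sum_pos' (fun j _ => sq_nonneg _) ⟨i, Finset.mem_univ i, ?_⟩
        exact pow_pos (abs_pos.mpr hi) 2 |>.trans_eq (by rw [sq_abs])
      refine ⟨fun i => (Real.sqrt (∑ j, (x j)^2))⁻¹ * x i, ?_, ?_⟩
      · rw [← Finset.mul_sum, hsum, mul_zero]
      · have : ∑ i, ((Real.sqrt (∑ j, (x j)^2))⁻¹ * x i)^2
            = ((Real.sqrt (∑ j, (x j)^2))⁻¹)^2 * ∑ i, (x i)^2 := by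
          rw [Finset.mul_sum]
          exact Finset.sum_congr rfl fun i _ => by ring
        rw [this, ← Real.sqrt_inv, Real.sq_sqrt (inv_nonneg.mpr hs.le)]
        exact inv_mul_cancel₀ (ne_of_gt hs)

private lemma aux_sqrt_add {N : ℕ} (u v : Fin N → ℝ) :
    Real.sqrt (∑ i, (u i + v i)^2)
      ≤ Real.sqrt (∑ i, (u i)^2) + Real.sqrt (∑ i, (v i)^2) := by
  set a := Real.sqrt (∑ i, (u i)^2) with ha
  set b := Real.sqrt (∑ i, (v i)^2) with hb
  have ha0 : 0 ≤ a := Real.sqrt_nonneg _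
  have hb0 : 0 ≤ b := Real.sqrt_nonneg _
  have hu : ∑ i, (u i)^2 = a^2 := (Real.sq_sqrt (Finset.sum_nonneg fun i _ => sq_nonneg _)).symm
  have hv : ∑ i, (v i)^2 = b^2 := (Real.sq_sqrt (Finset.sum_nonneg fun i _ => sq_nonneg _)).symm
  have hcs : ∑ i, u i * v i ≤ a * b := by
    have h1 : (∑ i, u i * v i)^2 ≤ (∑ i, (u i)^2) * (∑ i, (v i)^2) :=
      Finset.sum_mul_sq_le_sq_mul_sq _ _ _
    have h2 : ∑ i, u i * v i ≤ |∑ i, u i * v i| := le_abs_self _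
    have h3 : |∑ i, u i * v i| = Real.sqrt ((∑ i, u i * v i)^2) := (Real.sqrt_sq_eq_abs _).symm
    calc ∑ i, u i * v i ≤ Real.sqrt ((∑ i, u i * v i)^2) := h3 ▸ h2
      _ ≤ Real.sqrt ((∑ i, (u i)^2) * (∑ i, (v i)^2)) := Real.sqrt_le_sqrt h1
      _ = a * b := by rw [hu, hv, ← mul_pow, Real.sqrt_sq (mul_nonneg ha0 hb0)]
  have hexp : ∑ i, (u i + v i)^2 ≤ (a + b)^2 := by
    have : ∑ i, (u i + v i)^2 = ∑ i, (u i)^2 + 2 * ∑ i, u i * v i + ∑ i, (v i)^2 := by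
      rw [Finset.mul_sum, ← Finset.sum_add_distrib, ← Finset.sum_add_distrib]
      exact Finset.sum_congr rfl fun i _ => by ring
    rw [this, hu, hv]; nlinarith
  calc Real.sqrt (∑ i, (u i + v i)^2) ≤ Real.sqrt ((a+b)^2) := Real.sqrt_le_sqrt hexp
    _ = a + b := Real.sqrt_sq (by linarith)

private lemma aux_sqrt_smul {N : ℕ} (c : ℝ) (u : Fin N → ℝ) :
    Real.sqrt (∑ i, (c * u i)^2) = |c| * Real.sqrt (∑ i, (u i)^2) := by
  have : ∑ i, (c * u i)^2 = c^2 * ∑ i, (u i)^2 := by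
    rw [Finset.mul_sum]; exact Finset.sum_congr rfl fun i _ => by ring
  rw [this, Real.sqrt_mul (sq_nonneg c), Real.sqrt_sq_eq_abs]

private lemma aux_tendsto_zero (a b : ℕ → ℝ) (ρ : ℝ) (hρ0 : 0 ≤ ρ) (hρ1 : ρ < 1)
    (ha : ∀ k, 0 ≤ a k) (hb : ∀ k, 0 ≤ b k)
    (hrec : ∀ k, a (k+1) ≤ ρ * a k + b k)
    (hb0 : Filter.Tendsto b Filter.atTop (nhds 0)) :
    Filter.Tendsto a Filter.atTop (nhds 0) := by
  rw [Metric.tendsto_atTop]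
  intro ε hε
  have hq : 0 < (1 - ρ) * (ε/4) := by nlinarith
  obtain ⟨n, hn⟩ := (Metric.tendsto_atTop.mp hb0) ((1-ρ)*(ε/4)) hq
  have hbn : ∀ k ≥ n, b k ≤ (1-ρ)*(ε/4) := by
    intro k hk
    have := hn k hk
    rw [Real.dist_eq, sub_zero, abs_of_nonneg (hb k)] at this
    linarith
  have key : ∀ m, a (n + m) ≤ ρ^m * a n + ε/4 := by
    intro m
    induction m with
    | zero => simp; linarith [ha n, hε]
    | succ m ih =>
      have h1 := hrec (n + m)
      have h2 := hbn (n + m) (Nat.le_add_right n m)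
      have : a (n + (m+1)) = a ((n+m)+1) := by ring_nf
      rw [this]
      calc a ((n+m)+1) ≤ ρ * a (n+m) + b (n+m) := h1
        _ ≤ ρ * (ρ^m * a n + ε/4) + (1-ρ)*(ε/4) := by
            have := mul_le_mul_of_nonneg_left ih hρ0
            linarith
        _ = ρ^(m+1) * a n + (ρ*(ε/4) + (1-ρ)*(ε/4)) := by ring
        _ = ρ^(m+1) * a n + ε/4 := by ring
  have hpow : Filter.Tendsto (fun m => ρ^m * a n) Filter.atTop (nhds 0) := by
    simpa using (tendsto_pow_atTop_nhds_zero_of_lt_one hρ0 hρ1).mul_const (a n)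
  obtain ⟨m₀, hm₀⟩ := (Metric.tendsto_atTop.mp hpow) (ε/4) (by positivity)
  refine ⟨n + m₀, fun k hk => ?_⟩
  have hkn : n ≤ k := le_trans (Nat.le_add_right n m₀) hk
  obtain ⟨m, rfl⟩ := Nat.exists_eq_add_of_le hkn
  have hm : m₀ ≤ m := by omega
  have := hm₀ m hm
  rw [Real.dist_eq, sub_zero] at this
  have h5 : ρ^m * a n ≤ |ρ^m * a n| := le_abs_self _
  rw [Real.dist_eq, sub_zero, abs_of_nonneg (ha _)]
  have := key m
  linarith

/-- for the coupled iteration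
`λ(k+1) = (I - ε'L)λ(k) + σ(k)ΔP̂(k)` on a connected undirected graph with
vanishing gains and bounded disagreement of `ΔP̂`, the disagreement of `λ`
vanishes: `λ_i(k) - λ_j(k) → 0`. -/
theorem stmt13 (N : ℕ) (hN : 0 < N)
    (A : Matrix (Fin N) (Fin N) ℝ) (hA : ∀ i j, 0 ≤ A i j)
    (hAsymm : A.IsSymm)
    (hconn : ∀ i j : Fin N,
      Relation.ReflTransGen (fun p q : Fin N => 0 < A p q) i j)
    (Lap : Matrix (Fin N) (Fin N) ℝ)
    (hLap : Lap = Matrix.diagonal (fun i => ∑ j, A i j) - A)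
    (ε' : ℝ) (hε : 0 < ε')
    (hε' : ε' < 1 / (Finset.univ.sup' ⟨⟨0, hN⟩, Finset.mem_univ _⟩
      (fun i : Fin N => ∑ j, A i j)))
    (σ : ℕ → ℝ) (hσpos : ∀ k, 0 < σ k)
    (hσ : Filter.Tendsto σ Filter.atTop (nhds 0))
    (J : Matrix (Fin N) (Fin N) ℝ)
    (hJ : J = (N : ℝ)⁻¹ • Matrix.of (fun _ _ : Fin N => (1 : ℝ)))
    (hatP : ℕ → Fin N → ℝ) (C : ℝ)
    (hbdd : ∀ k, ‖(1 - J).mulVec (hatP k)‖ ≤ C)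
    (lam : ℕ → Fin N → ℝ)
    (hrec : ∀ k, lam (k + 1) =
      (1 - ε' • Lap).mulVec (lam k) + σ k • hatP k) :
    ∀ i j : Fin N, Filter.Tendsto (fun k => lam k i - lam k j)
      Filter.atTop (nhds 0) := by
  have hNR : (0:ℝ) < (N:ℝ) := by exact_mod_cast hN
  set d : Fin N → ℝ := fun i => ∑ j, A i j with hd
  set dmax : ℝ := Finset.univ.sup' ⟨⟨0, hN⟩, Finset.mem_univ _⟩ d with hdmax
  have hddmax : ∀ i, d i ≤ dmax := fun i => Finset.le_sup' d (Finset.mem_univ i)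
  have hd0 : ∀ i, 0 ≤ d i := fun i => Finset.sum_nonneg fun j _ => hA i j
  have hdmaxpos : 0 < dmax := by
    by_contra h
    push_neg at h
    have : 1 / dmax ≤ 0 := by
      rcases lt_or_eq_of_le h with h' | h'
      · exact le_of_lt (div_neg_of_pos_of_neg one_pos h')
      · rw [h']; simp
    linarith
  have hεdmax : ε' * dmax < 1 := (lt_div_iff₀ hdmaxpos).mp hε'
  have hεd : ∀ i, ε' * d i < 1 :=
    fun i => lt_of_le_of_lt (mul_le_mul_of_nonneg_left (hddmax i) hε.le) hεdmax
  -- entries of Lap and P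
  set P : Matrix (Fin N) (Fin N) ℝ := 1 - ε' • Lap with hP
  have hLapE : ∀ i j, Lap i j = (if i = j then d i else 0) - A i j := by
    intro i j
    rw [hLap]
    simp [Matrix.diagonal_apply, Matrix.sub_apply]
  have hPE : ∀ i j, P i j = (if i = j then 1 else 0) - ε' * ((if i = j then d i else 0) - A i j) := by
    intro i j
    rw [hP]
    simp [Matrix.sub_apply, Matrix.smul_apply, Matrix.one_apply, hLapE i j]
  have hPdiag : ∀ i, 0 < P i i := by
    intro i
    have h := hPE i i
    rw [if_pos rfl, if_pos rfl] at h
    rw [h]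
    have := hεd i
    have := hA i i
    nlinarith [hε.le]
  have hP0 : ∀ i j, 0 ≤ P i j := by
    intro i j
    by_cases h : i = j
    · subst h; exact (hPdiag i).le
    · rw [hPE]
      simp only [if_neg h]
      have := hA i j
      nlinarith [hε.le]
  have hPs : ∀ i j, P j i = P i j := by
    intro i j
    rw [hPE, hPE]
    have hsymm := hAsymm.apply i j  -- A j i = A i j
    by_cases h : i = j
    · subst h; rfl
    · have e1 : (if j = i then d j else 0) = 0 := if_neg (Ne.symm h)
      have e2 : (if i = j then d i else 0) = 0 := if_neg h
      have e3 : (if j = i then (1:ℝ) else 0) = 0 := if_neg (Ne.symm h)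
      have e4 : (if i = j then (1:ℝ) else 0) = 0 := if_neg h
      rw [e1, e2, e3, e4, hsymm]
  have hLaprow : ∀ i, ∑ j, Lap i j = 0 := by
    intro i
    simp only [hLapE]
    rw [Finset.sum_sub_distrib, Finset.sum_ite_eq]
    simp [hd]
  have hLapcol : ∀ j, ∑ i, Lap i j = 0 := by
    intro j
    have : ∀ i, Lap i j = Lap j i := by
      intro i
      rw [hLapE, hLapE, hAsymm.apply i j]
      by_cases h : i = j
      · subst h; rfl
      · rw [if_neg h, if_neg (Ne.symm h)]
    simp only [this]
    exact hLaprow j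
  have hProw : ∀ i, ∑ j, P i j = 1 := by
    intro i
    have : ∑ j, P i j = (∑ j, (1:Matrix (Fin N) (Fin N) ℝ) i j) - ε' * ∑ j, Lap i j := by
      rw [hP, Finset.mul_sum, ← Finset.sum_sub_distrib]
      exact Finset.sum_congr rfl fun j _ => by simp [Matrix.sub_apply, Matrix.smul_apply]
    rw [this, hLaprow i, mul_zero, sub_zero]
    simp [Matrix.one_apply, Finset.sum_ite_eq]
  -- edge property
  have hedge : ∀ x : Fin N → ℝ, (∑ i, x i = 0) → x ≠ 0 →
      ∃ p q, 0 < (Pᵀ * P) p q ∧ x p ≠ x q := by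
    intro x hsum hx
    have hA_edge : ∃ p q, 0 < A p q ∧ x p ≠ x q := by
      by_contra h
      push_neg at h
      have hconst : ∀ i j, x i = x j := by
        intro i j
        induction hconn i j with
        | refl => rfl
        | tail _ e ih => exact ih.trans (h _ _ e)
      apply hx
      funext i
      have h1 : ∑ j, x j = (N:ℝ) * x i := by
        rw [Finset.sum_congr rfl fun j _ => hconst j i]
        simp [Finset.card_univ, mul_comm]
      have : (N:ℝ) * x i = 0 := by rw [← h1, hsum]
      have := mul_eq_zero.mp this
      rcases this with h' | h'
      · exact absurd h' (ne_of_gt hNR)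
      · exact h'
    obtain ⟨p, q, hpq, hxpq⟩ := hA_edge
    have hpne : p ≠ q := fun h => hxpq (by rw [h])
    have hPpq : 0 < P p q := by
      have h := hPE p q
      rw [if_neg hpne, if_neg hpne] at h
      rw [h]
      have := mul_pos hε hpq
      linarith
    refine ⟨p, q, ?_, hxpq⟩
    have hQ : (Pᵀ * P) p q = ∑ k, P k p * P k q := by
      rw [Matrix.mul_apply]
      exact Finset.sum_congr rfl fun k _ => by rw [Matrix.transpose_apply]
    rw [hQ]
    calc (0:ℝ) < P p p * P p q := mul_pos (hPdiag p) hPpq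
      _ ≤ ∑ k, P k p * P k q :=
        Finset.single_le_sum (f := fun k => P k p * P k q)
          (fun k _ => mul_nonneg (hP0 k p) (hP0 k q)) (Finset.mem_univ p)
  obtain ⟨ρ, hρ0, hρ1, hcontr⟩ := aux_contraction P hP0 hPs hProw hedge
  -- disagreement vector
  set δ : ℕ → Fin N → ℝ := fun k => (1 - J).mulVec (lam k) with hδ
  set w : ℕ → Fin N → ℝ := fun k => (1 - J).mulVec (hatP k) with hw
  have hmvJ : ∀ v : Fin N → ℝ, ∀ i, (1 - J).mulVec v i = v i - (N:ℝ)⁻¹ * ∑ j, v j := by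
    intro v i
    simp only [Matrix.mulVec, dotProduct, Matrix.sub_apply, Matrix.one_apply, hJ,
      Matrix.smul_apply, Matrix.of_apply, smul_eq_mul, mul_one, sub_mul, ite_mul,
      one_mul, zero_mul]
    rw [Finset.sum_sub_distrib, Finset.sum_ite_eq, ← Finset.mul_sum]
    simp
  have hδsum : ∀ k, ∑ i, δ k i = 0 := by
    intro k
    simp only [hδ, hmvJ]
    rw [Finset.sum_sub_distrib]
    rw [Finset.sum_const, Finset.card_univ]
    simp only [Fintype.card_fin, nsmul_eq_mul]
    rw [← mul_assoc, mul_inv_cancel₀ (ne_of_gt hNR), one_mul, sub_self]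
  -- commutation
  have hJL : J * Lap = 0 := by
    ext i j
    rw [Matrix.mul_apply, Matrix.zero_apply]
    simp only [hJ, Matrix.smul_apply, Matrix.of_apply, smul_eq_mul, mul_one]
    rw [← Finset.mul_sum, hLapcol j, mul_zero]
  have hLJ : Lap * J = 0 := by
    ext i j
    rw [Matrix.mul_apply, Matrix.zero_apply]
    simp only [hJ, Matrix.smul_apply, Matrix.of_apply, smul_eq_mul, mul_one]
    rw [← Finset.sum_mul, hLaprow i, zero_mul]
  have hcomm : (1 - J) * P = P * (1 - J) := by
    rw [hP]
    simp only [Matrix.sub_mul, Matrix.mul_sub, Matrix.one_mul, Matrix.mul_one,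
      Matrix.mul_smul, Matrix.smul_mul, hJL, hLJ, smul_zero, sub_zero]
    abel
  have hδrec : ∀ k, δ (k+1) = P.mulVec (δ k) + σ k • w k := by
    intro k
    simp only [hδ, hw, hrec k, ← hP]
    rw [Matrix.mulVec_add, Matrix.mulVec_smul]
    congr 1
    rw [Matrix.mulVec_mulVec, Matrix.mulVec_mulVec, hcomm]
  -- norms
  set a : ℕ → ℝ := fun k => Real.sqrt (∑ i, (δ k i)^2) with ha
  have hC0 : 0 ≤ C := le_trans (norm_nonneg _) (hbdd 0)
  have hwbound : ∀ k, Real.sqrt (∑ i, (w k i)^2) ≤ Real.sqrt ((N:ℝ) * C^2) := by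
    intro k
    apply Real.sqrt_le_sqrt
    have : ∀ i, (w k i)^2 ≤ C^2 := by
      intro i
      have h1 : |w k i| ≤ C := le_trans (norm_le_pi_norm (w k) i) (hbdd k)
      calc (w k i)^2 = |w k i|^2 := (sq_abs _).symm
        _ ≤ C^2 := pow_le_pow_left₀ (abs_nonneg _) h1 2
    calc ∑ i, (w k i)^2 ≤ ∑ _i : Fin N, C^2 := Finset.sum_le_sum fun i _ => this i
      _ = (N:ℝ) * C^2 := by simp [Finset.card_univ, mul_comm]
  set b : ℕ → ℝ := fun k => σ k * Real.sqrt ((N:ℝ) * C^2) with hb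
  have harec : ∀ k, a (k+1) ≤ ρ * a k + b k := by
    intro k
    have h0 : ∀ i, δ (k+1) i = P.mulVec (δ k) i + σ k * w k i := by
      intro i; rw [hδrec k]; simp
    have h1 : a (k+1) = Real.sqrt (∑ i, (P.mulVec (δ k) i + σ k * w k i)^2) := by
      simp only [ha]
      congr 1
      exact Finset.sum_congr rfl fun i _ => by rw [h0 i]
    rw [h1]
    calc Real.sqrt (∑ i, (P.mulVec (δ k) i + σ k * w k i)^2)
        ≤ Real.sqrt (∑ i, (P.mulVec (δ k) i)^2) + Real.sqrt (∑ i, (σ k * w k i)^2) :=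
          aux_sqrt_add _ _
      _ ≤ ρ * a k + Real.sqrt (∑ i, (σ k * w k i)^2) := by
          have := hcontr (δ k) (hδsum k)
          exact add_le_add_left this _
      _ = ρ * a k + σ k * Real.sqrt (∑ i, (w k i)^2) := by
          rw [aux_sqrt_smul, abs_of_pos (hσpos k)]
      _ ≤ ρ * a k + b k := by
          refine add_le_add_right ?_ _
          exact mul_le_mul_of_nonneg_left (hwbound k) (hσpos k).le
  have ha0 : ∀ k, 0 ≤ a k := fun k => Real.sqrt_nonneg _
  have hb0 : ∀ k, 0 ≤ b k := fun k => mul_nonneg (hσpos k).le (Real.sqrt_nonneg _)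
  have hbtend : Filter.Tendsto b Filter.atTop (nhds 0) := by
    have := hσ.mul_const (Real.sqrt ((N:ℝ) * C^2))
    simpa [hb] using this
  have hatend : Filter.Tendsto a Filter.atTop (nhds 0) :=
    aux_tendsto_zero a b ρ hρ0 hρ1 ha0 hb0 harec hbtend
  -- conclusion
  intro i j
  have hdiff : ∀ k, lam k i - lam k j = δ k i - δ k j := by
    intro k
    simp only [hδ, hmvJ]
    ring
  have hboundf : ∀ k, ‖lam k i - lam k j‖ ≤ 2 * a k := by
    intro k
    rw [Real.norm_eq_abs, hdiff k]
    calc |δ k i - δ k j| ≤ |δ k i| + |δ k j| := abs_sub _ _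
      _ ≤ a k + a k := add_le_add (aux_abs_le_sqrt (δ k) i) (aux_abs_le_sqrt (δ k) j)
      _ = 2 * a k := by ring
  exact squeeze_zero_norm hboundf (by simpa using hatend.const_mul 2)
end

section
/- Consider sequences in ℝ^N satisfying Y(k+1) = (I_N - μL)ΔP̂(k) + ΔP(k+1) - ΔP(k) and ΔP̂(k+1) = (I_N - C)Y(k+1), with L the Laplacian of an undirected graph (so 1_N^T L = 0), C = A_{0*} a diagonal 0-1 matrix, and scalar update P_MG(k+1) = P_MG(k) + 1_N^T C Y(k+1) (equivalently Σ_i a_{0i} y_i(k+1)). Then the quantity 1_N^T[ΔP̂(k) - ΔP(k)] + P_MG(k) is invariant in k; in particular if it is 0 at k = 0 then Σ_i ΔP̂_i(k) + P_MG(k) = Σ_i ΔP_i(k) for all k ≥ 0. -/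
/-- for the grid-connected estimation scheme, the quantity
`1ᵀ[ΔP̂(k) - ΔP(k)] + P_MG(k)` is invariant in `k`; in particular, if it
vanishes at `k = 0` then `Σ ΔP̂_i(k) + P_MG(k) = Σ ΔP_i(k)` for all `k`. -/
theorem stmt16 (N : ℕ)
    (Lap : Matrix (Fin N) (Fin N) ℝ)
    (hLapcol : ∀ j : Fin N, ∑ i, Lap i j = 0)
    (μ : ℝ)
    (C : Matrix (Fin N) (Fin N) ℝ) (a0 : Fin N → ℝ)
    (ha0 : ∀ i, a0 i = 0 ∨ a0 i = 1)
    (hC : C = Matrix.diagonal a0)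
    (dP hatP Y : ℕ → Fin N → ℝ) (PMG : ℕ → ℝ)
    (hY : ∀ k, Y (k + 1) =
      (1 - μ • Lap).mulVec (hatP k) + (dP (k + 1) - dP k))
    (hhatP : ∀ k, hatP (k + 1) = (1 - C).mulVec (Y (k + 1)))
    (hPMG : ∀ k, PMG (k + 1) = PMG k + ∑ i, a0 i * Y (k + 1) i) :
    (∀ k : ℕ, (∑ i, (hatP k i - dP k i)) + PMG k =
      (∑ i, (hatP 0 i - dP 0 i)) + PMG 0) ∧
    ((∑ i, (hatP 0 i - dP 0 i)) + PMG 0 = 0 →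
      ∀ k : ℕ, (∑ i, hatP k i) + PMG k = ∑ i, dP k i) := by
  -- sum of Y(k+1)
  have hsumY : ∀ k, ∑ i, Y (k + 1) i =
      (∑ i, hatP k i) + (∑ i, dP (k + 1) i) - ∑ i, dP k i := by
    intro k
    have h1 : ∑ i, ((1 - μ • Lap).mulVec (hatP k)) i = ∑ i, hatP k i := by
      simp only [Matrix.mulVec, dotProduct]
      rw [Finset.sum_comm]
      refine Finset.sum_congr rfl fun j _ => ?_
      rw [← Finset.sum_mul]
      have : ∑ i, (1 - μ • Lap) i j = 1 := by
        simp only [Matrix.sub_apply, Matrix.smul_apply, smul_eq_mul,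
          Finset.sum_sub_distrib, ← Finset.mul_sum, hLapcol j]
        simp [Matrix.one_apply, Finset.sum_ite_eq']
      rw [this, one_mul]
    rw [hY k]
    simp only [Pi.add_apply, Pi.sub_apply, Finset.sum_add_distrib,
      Finset.sum_sub_distrib, h1]
    ring
  -- sum of hatP(k+1)
  have hsumhat : ∀ k, ∑ i, hatP (k + 1) i =
      (∑ i, Y (k + 1) i) - ∑ i, a0 i * Y (k + 1) i := by
    intro k
    rw [hhatP k]
    simp only [Matrix.mulVec, dotProduct]
    rw [Finset.sum_comm]
    rw [← Finset.sum_sub_distrib]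
    refine Finset.sum_congr rfl fun j _ => ?_
    rw [← Finset.sum_mul]
    have : ∑ i, (1 - C) i j = 1 - a0 j := by
      simp only [hC, Matrix.sub_apply, Finset.sum_sub_distrib]
      simp [Matrix.one_apply, Matrix.diagonal_apply, Finset.sum_ite_eq']
    rw [this]
    ring
  have key : ∀ k : ℕ, (∑ i, (hatP k i - dP k i)) + PMG k =
      (∑ i, (hatP 0 i - dP 0 i)) + PMG 0 := by
    intro k
    induction k with
    | zero => rfl
    | succ k ih =>
      rw [← ih]
      simp only [Finset.sum_sub_distrib] at *
      rw [hsumhat k, hsumY k, hPMG k]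
      ring
  refine ⟨key, fun h0 k => ?_⟩
  have := key k
  rw [h0] at this
  simp only [Finset.sum_sub_distrib] at this
  linarith
end

section
/- Let L be the Laplacian of a connected weighted undirected graph, 0 < μ' < 1/max_i Σ_j a_ij, and suppose ‖(I_N - μ'L)^k - J_N‖ ≤ c ρ^k with ρ ∈ (0,1). Let ΔP : ℕ → ℝ^N be a sequence whose increments vanish: ΔP(k+1) - ΔP(k) → 0. Then the disagreement δ(k) = (I_N - J_N) ΔP̂(k) of the solution to ΔP̂(k+1) = (I_N - μ'L)ΔP̂(k) + ΔP(k+1) - ΔP(k) converges to 0 as k → ∞. -/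
open scoped Matrix.Norms.L2Operator
open Filter Finset

lemma mulVec_sum_aux {N : ℕ} (B : Matrix (Fin N) (Fin N) ℝ) (s : Finset ℕ)
    (f : ℕ → Fin N → ℝ) :
    B.mulVec (∑ j ∈ s, f j) = ∑ j ∈ s, B.mulVec (f j) := by
  simp only [← Matrix.mulVecLin_apply]
  exact map_sum B.mulVecLin f s

/-- Discrete convolution of a decaying geometric kernel with a vanishing
nonnegative sequence tends to zero. -/
lemma conv_aux {ρ : ℝ} (h0 : 0 < ρ) (h1 : ρ < 1) (a : ℕ → ℝ) (ha : ∀ n, 0 ≤ a n)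
    (hlim : Tendsto a atTop (nhds 0)) :
    Tendsto (fun k => ∑ j ∈ Finset.range k, ρ ^ (k - 1 - j) * a j) atTop (nhds 0) := by
  rw [NormedAddCommGroup.tendsto_nhds_zero]
  intro ε hε
  have hρ1 : 0 < 1 - ρ := by linarith
  set ε' : ℝ := ε * (1 - ρ) / 2 with hε'def
  have hε' : 0 < ε' := by positivity
  obtain ⟨K, hK⟩ := (Metric.tendsto_atTop.mp hlim) ε' hε'
  have hKa : ∀ j, K ≤ j → a j < ε' := by
    intro j hj
    have := hK j hj
    rw [Real.dist_eq, sub_zero, abs_of_nonneg (ha j)] at this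
    exact this
  set S : ℝ := ∑ j ∈ Finset.range K, a j with hSdef
  have hS : 0 ≤ S := Finset.sum_nonneg fun j _ => ha j
  have hhead : Tendsto (fun k => ρ ^ (k - K) * S) atTop (nhds 0) := by
    have h1' : Tendsto (fun m : ℕ => ρ ^ m) atTop (nhds 0) :=
      tendsto_pow_atTop_nhds_zero_of_lt_one h0.le h1
    have := (h1'.comp (tendsto_sub_atTop_nat K)).mul_const S
    simpa using this
  obtain ⟨k₀, hk₀⟩ := (Metric.tendsto_atTop.mp hhead) (ε / 2) (by positivity)
  filter_upwards [eventually_ge_atTop (max K k₀)] with k hk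
  have hkK : K ≤ k := le_trans (le_max_left _ _) hk
  have hkk₀ : k₀ ≤ k := le_trans (le_max_right _ _) hk
  have hnn : ∀ j ∈ Finset.range k, 0 ≤ ρ ^ (k - 1 - j) * a j := by
    intro j _; exact mul_nonneg (by positivity) (ha j)
  rw [Real.norm_eq_abs, abs_of_nonneg (Finset.sum_nonneg hnn)]
  have hsplit : ∑ j ∈ Finset.range k, ρ ^ (k - 1 - j) * a j
      = (∑ j ∈ Finset.range K, ρ ^ (k - 1 - j) * a j)
        + ∑ j ∈ Finset.Ico K k, ρ ^ (k - 1 - j) * a j := by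
    rw [Finset.range_eq_Ico, ← Finset.sum_Ico_consecutive _ (Nat.zero_le K) hkK, ← Finset.range_eq_Ico]
  rw [hsplit]
  have hheadle : ∑ j ∈ Finset.range K, ρ ^ (k - 1 - j) * a j ≤ ρ ^ (k - K) * S := by
    rw [hSdef, Finset.mul_sum]
    refine Finset.sum_le_sum fun j hj => ?_
    have hjK : j < K := Finset.mem_range.mp hj
    have : ρ ^ (k - 1 - j) ≤ ρ ^ (k - K) :=
      pow_le_pow_of_le_one h0.le h1.le (by omega)
    exact mul_le_mul_of_nonneg_right this (ha j)
  have hheadlt : ρ ^ (k - K) * S < ε / 2 := by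
    have := hk₀ k hkk₀
    rw [Real.dist_eq, sub_zero] at this
    calc ρ ^ (k - K) * S ≤ |ρ ^ (k - K) * S| := le_abs_self _
      _ < ε / 2 := this
  have htail : ∑ j ∈ Finset.Ico K k, ρ ^ (k - 1 - j) * a j ≤ ε / 2 := by
    have step1 : ∑ j ∈ Finset.Ico K k, ρ ^ (k - 1 - j) * a j
        ≤ ∑ j ∈ Finset.Ico K k, ρ ^ (k - 1 - j) * ε' := by
      refine Finset.sum_le_sum fun j hj => ?_
      exact mul_le_mul_of_nonneg_left (hKa j (Finset.mem_Ico.mp hj).1).le (by positivity)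
    have step2 : ∑ j ∈ Finset.Ico K k, ρ ^ (k - 1 - j) * ε'
        ≤ ∑ j ∈ Finset.range k, ρ ^ (k - 1 - j) * ε' := by
      refine Finset.sum_le_sum_of_subset_of_nonneg ?_ (fun j _ _ => by positivity)
      rw [Finset.range_eq_Ico]
      exact Finset.Ico_subset_Ico (Nat.zero_le _) le_rfl
    have step3 : ∑ j ∈ Finset.range k, ρ ^ (k - 1 - j) * ε'
        = (∑ j ∈ Finset.range k, ρ ^ j) * ε' := by
      rw [← Finset.sum_mul]
      congr 1
      exact Finset.sum_range_reflect (fun j => ρ ^ j) k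
    have step4 : (∑ j ∈ Finset.range k, ρ ^ j) * ε' ≤ (1 / (1 - ρ)) * ε' := by
      refine mul_le_mul_of_nonneg_right ?_ hε'.le
      have h2 : (ρ ^ k - 1) / (ρ - 1) = (1 - ρ ^ k) / (1 - ρ) := by
        rw [← neg_div_neg_eq]; ring_nf
      rw [geom_sum_eq (ne_of_lt h1), h2, div_le_div_iff₀ hρ1 hρ1]
      nlinarith [pow_pos h0 k]
    have heq : (1 / (1 - ρ)) * ε' = ε / 2 := by
      rw [hε'def]
      field_simp
    linarith
  linarith

/-- if `‖(I - μ'L)^k - J‖ ≤ c ρ^k` and the increments of `ΔP`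
vanish, then the disagreement `(I - J)ΔP̂(k)` of the averaged-mismatch
iteration tends to zero. -/
theorem stmt17 (N : ℕ) (hN : 0 < N)
    (A : Matrix (Fin N) (Fin N) ℝ) (hA : ∀ i j, 0 ≤ A i j)
    (hAsymm : A.IsSymm)
    (hconn : ∀ i j : Fin N,
      Relation.ReflTransGen (fun p q : Fin N => 0 < A p q) i j)
    (Lap : Matrix (Fin N) (Fin N) ℝ)
    (hLap : Lap = Matrix.diagonal (fun i => ∑ j, A i j) - A)
    (μ' : ℝ) (hμ : 0 < μ')
    (hμ' : μ' < 1 / (Finset.univ.sup' ⟨⟨0, hN⟩, Finset.mem_univ _⟩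
      (fun i : Fin N => ∑ j, A i j)))
    (J : Matrix (Fin N) (Fin N) ℝ)
    (hJ : J = (N : ℝ)⁻¹ • Matrix.of (fun _ _ : Fin N => (1 : ℝ)))
    (c ρ : ℝ) (hρ : ρ ∈ Set.Ioo (0 : ℝ) 1) (hc : 0 < c)
    (hexp : ∀ k : ℕ, ‖(1 - μ' • Lap) ^ k - J‖ ≤ c * ρ ^ k)
    (dP : ℕ → Fin N → ℝ)
    (hdP : Filter.Tendsto (fun k => dP (k + 1) - dP k) Filter.atTop (nhds 0))
    (hatP : ℕ → Fin N → ℝ)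
    (hrec : ∀ k, hatP (k + 1) =
      (1 - μ' • Lap).mulVec (hatP k) + (dP (k + 1) - dP k)) :
    Filter.Tendsto (fun k => (1 - J).mulVec (hatP k))
      Filter.atTop (nhds 0) := by
  obtain ⟨hρ0, hρ1⟩ := hρ
  have hNne : (N : ℝ) ≠ 0 := Nat.cast_ne_zero.mpr hN.ne'
  set M : Matrix (Fin N) (Fin N) ℝ := 1 - μ' • Lap with hM
  set B : Matrix (Fin N) (Fin N) ℝ := M - J with hB
  clear_value B
  clear_value M
  -- row/column sums of the Laplacian are zero
  have hrow : ∀ i, ∑ j, Lap i j = 0 := by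
    intro i
    simp [hLap, Matrix.sub_apply, Finset.sum_sub_distrib, Matrix.diagonal_apply]
  have hLsymm : Lap.IsSymm := by
    rw [hLap]
    exact (Matrix.isSymm_diagonal _).sub hAsymm
  have hcol : ∀ j, ∑ i, Lap i j = 0 := by
    intro j
    have h : ∀ i, Lap i j = Lap j i := fun i => Matrix.IsSymm.apply hLsymm j i
    simp_rw [h]
    exact hrow j
  -- key matrix identities
  have hJL : J * Lap = 0 := by
    ext i j
    simp only [hJ, Matrix.smul_mul, Matrix.smul_apply, Matrix.mul_apply, Matrix.of_apply,
      one_mul, Matrix.zero_apply, smul_eq_mul, ← Finset.mul_sum]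
    rw [hcol j, mul_zero]
  have hLJ : Lap * J = 0 := by
    ext i j
    simp only [hJ, Matrix.mul_smul, Matrix.smul_apply, Matrix.mul_apply, Matrix.of_apply,
      mul_one, Matrix.zero_apply, smul_eq_mul, ← Finset.mul_sum, ← Finset.sum_mul]
    rw [hrow i, zero_mul]
  have hJJ : J * J = J := by
    ext i j
    simp only [hJ, Matrix.smul_mul, Matrix.mul_smul, Matrix.smul_apply, Matrix.mul_apply,
      Matrix.of_apply, one_mul, smul_eq_mul, Finset.sum_const, Finset.card_univ,
      Fintype.card_fin, nsmul_eq_mul]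
    field_simp
  have hJM : J * M = J := by
    rw [hM, Matrix.mul_sub, Matrix.mul_one, Matrix.mul_smul, hJL, smul_zero, sub_zero]
  have hMJ : M * J = J := by
    rw [hM, Matrix.sub_mul, Matrix.one_mul, Matrix.smul_mul, hLJ, smul_zero, sub_zero]
  have hMpowJ : ∀ m : ℕ, M ^ m * J = J := by
    intro m
    induction m with
    | zero => simp
    | succ m ih => rw [pow_succ, Matrix.mul_assoc, hMJ, ih]
  have hBpow : ∀ m : ℕ, B ^ (m + 1) = M ^ (m + 1) - J := by
    intro m
    induction m with
    | zero => simp [hB]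
    | succ m ih =>
      rw [pow_succ, ih, hB, Matrix.sub_mul, Matrix.mul_sub, Matrix.mul_sub,
        hMpowJ, hJM, hJJ, ← pow_succ]
      abel
  -- norm bound on powers of B
  set C : ℝ := max c ‖(1 : Matrix (Fin N) (Fin N) ℝ)‖ with hC
  have hC0 : 0 < C := lt_max_of_lt_left hc
  have hBnorm : ∀ m : ℕ, ‖B ^ m‖ ≤ C * ρ ^ m := by
    intro m
    cases m with
    | zero =>
      rw [pow_zero, pow_zero, mul_one]
      exact le_max_right c ‖(1 : Matrix (Fin N) (Fin N) ℝ)‖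
    | succ m =>
      rw [hBpow m]
      calc ‖M ^ (m + 1) - J‖ ≤ c * ρ ^ (m + 1) := hexp (m + 1)
        _ ≤ C * ρ ^ (m + 1) :=
          mul_le_mul_of_nonneg_right (le_max_left _ _) (by positivity)
  -- the disagreement recursion
  set w : ℕ → Fin N → ℝ := fun k => (1 - J).mulVec (dP (k + 1) - dP k) with hw
  set v : ℕ → Fin N → ℝ := fun k => (1 - J).mulVec (hatP k) with hv
  have h1JM : (1 - J) * M = B := by
    rw [Matrix.sub_mul, Matrix.one_mul, hJM, hB]
  have hB1J : B * (1 - J) = B := by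
    rw [Matrix.mul_sub, Matrix.mul_one, hB, Matrix.sub_mul, hMJ, hJJ]
    abel
  have hvrec : ∀ k, v (k + 1) = B.mulVec (v k) + w k := by
    intro k
    show (1 - J).mulVec (hatP (k + 1)) = B.mulVec ((1 - J).mulVec (hatP k)) + w k
    rw [hrec k, Matrix.mulVec_add, Matrix.mulVec_mulVec, h1JM,
      Matrix.mulVec_mulVec, hB1J, hw]
  -- closed form
  have hclosed : ∀ k, v k = (B ^ k).mulVec (v 0)
      + ∑ j ∈ Finset.range k, (B ^ (k - 1 - j)).mulVec (w j) := by
    intro k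
    induction k with
    | zero => simp
    | succ k ih =>
      rw [hvrec k, ih, Matrix.mulVec_add, Matrix.mulVec_mulVec, ← pow_succ',
        mulVec_sum_aux, Finset.sum_range_succ]
      have hterm : ∀ j ∈ Finset.range k,
          B.mulVec ((B ^ (k - 1 - j)).mulVec (w j)) = (B ^ (k + 1 - 1 - j)).mulVec (w j) := by
        intro j hj
        have hjk : j < k := Finset.mem_range.mp hj
        rw [Matrix.mulVec_mulVec, ← pow_succ']
        have hjeq : k - 1 - j + 1 = k + 1 - 1 - j := by omega
        rw [hjeq]
      rw [Finset.sum_congr rfl hterm]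
      have h0' : (B ^ (k + 1 - 1 - k)) = 1 := by norm_num
      rw [h0', Matrix.one_mulVec, add_assoc]
  -- Euclidean norm machinery
  set e : (Fin N → ℝ) → ℝ := fun x => ‖(EuclideanSpace.equiv (Fin N) ℝ).symm x‖ with he
  have he0 : ∀ x, 0 ≤ e x := fun x => norm_nonneg _
  have hemul : ∀ (P : Matrix (Fin N) (Fin N) ℝ) (x : Fin N → ℝ),
      e (P.mulVec x) ≤ ‖P‖ * e x := by
    intro P x
    exact P.l2_opNorm_mulVec ((EuclideanSpace.equiv (Fin N) ℝ).symm x)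
  have headd : ∀ x y, e (x + y) ≤ e x + e y := by
    intro x y
    simp only [he, map_add]
    exact norm_add_le _ _
  have hesum : ∀ (s : Finset ℕ) (f : ℕ → Fin N → ℝ),
      e (∑ j ∈ s, f j) ≤ ∑ j ∈ s, e (f j) := by
    intro s f
    simp only [he, map_sum]
    exact norm_sum_le _ _
  have hcoord : ∀ (x : Fin N → ℝ) (i : Fin N), |x i| ≤ e x := by
    intro x i
    rw [he]
    simp only []
    rw [EuclideanSpace.norm_eq]
    rw [show |x i| = Real.sqrt (|x i| ^ 2) from (Real.sqrt_sq (abs_nonneg _)).symm]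
    apply Real.sqrt_le_sqrt
    have h := Finset.single_le_sum (f := fun j => ‖x j‖ ^ 2)
      (fun j _ => by positivity) (Finset.mem_univ i)
    simpa [Real.norm_eq_abs] using h
  have hcont : Continuous fun x : Fin N → ℝ => e x := by
    have hc : Continuous fun x : Fin N → ℝ => (EuclideanSpace.equiv (Fin N) ℝ).symm x :=
      (EuclideanSpace.equiv (Fin N) ℝ).symm.continuous
    exact hc.norm
  have hw0 : Tendsto w atTop (nhds 0) := by
    have hlin : Continuous fun x : Fin N → ℝ => (1 - J).mulVec x := by
      have := LinearMap.continuous_of_finiteDimensional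
        ((1 - J).mulVecLin : (Fin N → ℝ) →ₗ[ℝ] (Fin N → ℝ))
      exact this
    have := (hlin.tendsto 0).comp hdP
    rw [hw]
    simpa [Function.comp_def, Matrix.mulVec_zero] using this
  have hew : Tendsto (fun k => e (w k)) atTop (nhds 0) := by
    have := (hcont.tendsto 0).comp hw0
    simpa [Function.comp_def, he] using this
  set a : ℕ → ℝ := fun j => C * e (w j) with ha
  have halim : Tendsto a atTop (nhds 0) := by
    have := hew.const_mul C
    simpa using this
  have hbound : ∀ k, e (v k) ≤ C * ρ ^ k * e (v 0)
      + ∑ j ∈ Finset.range k, ρ ^ (k - 1 - j) * a j := by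
    intro k
    calc e (v k) = e ((B ^ k).mulVec (v 0)
            + ∑ j ∈ Finset.range k, (B ^ (k - 1 - j)).mulVec (w j)) := by rw [← hclosed k]
      _ ≤ e ((B ^ k).mulVec (v 0))
            + e (∑ j ∈ Finset.range k, (B ^ (k - 1 - j)).mulVec (w j)) := headd _ _
      _ ≤ ‖B ^ k‖ * e (v 0)
            + ∑ j ∈ Finset.range k, e ((B ^ (k - 1 - j)).mulVec (w j)) :=
          add_le_add (hemul _ _) (hesum _ _)
      _ ≤ C * ρ ^ k * e (v 0) + ∑ j ∈ Finset.range k, ρ ^ (k - 1 - j) * a j := by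
          apply add_le_add
          · exact mul_le_mul_of_nonneg_right (hBnorm k) (he0 _)
          · refine Finset.sum_le_sum fun j hj => ?_
            calc e ((B ^ (k - 1 - j)).mulVec (w j)) ≤ ‖B ^ (k - 1 - j)‖ * e (w j) :=
                  hemul _ _
              _ ≤ (C * ρ ^ (k - 1 - j)) * e (w j) :=
                  mul_le_mul_of_nonneg_right (hBnorm _) (he0 _)
              _ = ρ ^ (k - 1 - j) * (C * e (w j)) := by ring
  have hglim : Tendsto (fun k => C * ρ ^ k * e (v 0)
      + ∑ j ∈ Finset.range k, ρ ^ (k - 1 - j) * a j) atTop (nhds 0) := by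
    have t1 : Tendsto (fun k : ℕ => C * ρ ^ k * e (v 0)) atTop (nhds 0) := by
      have := ((tendsto_pow_atTop_nhds_zero_of_lt_one hρ0.le
        hρ1).const_mul C).mul_const (e (v 0))
      simpa [mul_assoc] using this
    have t2 := conv_aux hρ0 hρ1 a (fun n => mul_nonneg hC0.le (he0 _)) halim
    simpa using t1.add t2
  have hev : Tendsto (fun k => e (v k)) atTop (nhds 0) :=
    squeeze_zero (fun k => he0 _) hbound hglim
  show Tendsto (fun k => v k) atTop (nhds 0)
  rw [tendsto_pi_nhds]
  intro i
  have hcb : ∀ k, ‖v k i‖ ≤ e (v k) := fun k => hcoord (v k) i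
  simpa using squeeze_zero_norm hcb hev
end
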